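/- arXiv:1903.00127 — 6 statements merged into one kernel-verified Lean document; each statement's English description precedes it below -/
import Mathlib

section
/- Let θ ∈ (0,1) and let a, k, k' : ℤ → ℕ be finitely supported functions, not all identically zero. Let w(n) = max(1,|n|), let n₁* ≥ n₂* ≥ n₃* ≥ … be the decreasing rearrangement of the finite multiset in which, for each n ∈ ℤ, the value w(n) appears with multiplicity 2a_n + k_n + k'_n, and set m*(k,k') = max(1, |∑_n (k_n − k'_n)·n|). Then ∑_{n∈ℤ} (2a_n + k_n + k'_n)·w(n)^θ − 2·(n₁*)^θ + m*(k,k')^θ ≥ (2 − 2^θ)·∑_{i≥3} (n_i*)^θ. -/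
open scoped BigOperators

/-- `w(n) = max(1, |n|)` as a real number. -/
noncomputable def wR (n : ℤ) : ℝ := max 1 |(n : ℝ)|

/-- The momentum `m(k,k') = ∑ₙ (kₙ - k'ₙ)·n`. -/
def momZ (k k' : ℤ →₀ ℕ) : ℤ :=
  ∑ n ∈ k.support ∪ k'.support, ((k n : ℤ) - (k' n : ℤ)) * n

/-- `m*(k,k') = max(1, |m(k,k')|)` as a real number. -/
noncomputable def mstarR (k k' : ℤ →₀ ℕ) : ℝ := ((max 1 |momZ k k'| : ℤ) : ℝ)

/-- The multiset in which, for each `n`, the value `w(n)` appears with multiplicity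
`2aₙ + kₙ + k'ₙ`. -/
noncomputable def valMultiset (a k k' : ℤ →₀ ℕ) : Multiset ℝ :=
  (a.support ∪ k.support ∪ k'.support).val.bind
    (fun n => Multiset.replicate (2 * a n + k n + k' n) (wR n))

lemma one_le_wR (n : ℤ) : 1 ≤ wR n := le_max_left _ _

lemma abs_le_wR (n : ℤ) : |(n : ℝ)| ≤ wR n := le_max_right _ _

lemma one_le_mstarR (k k' : ℤ →₀ ℕ) : 1 ≤ mstarR k k' := by
  rw [mstarR]
  exact_mod_cast le_max_left 1 |momZ k k'|

/-- Key concavity lemma: for `0 ≤ t ≤ b`, `(b+t)^θ ≤ b^θ + (2^θ-1)·t^θ`. -/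
lemma lemA {θ : ℝ} (hθ0 : 0 < θ) (hθ1 : θ < 1) {b t : ℝ} (ht : 0 ≤ t) (htb : t ≤ b) :
    (b + t) ^ θ ≤ b ^ θ + (2 ^ θ - 1) * t ^ θ := by
  rcases ht.eq_or_lt with rfl | htpos
  · simp [Real.zero_rpow hθ0.ne']
  have hb : (0:ℝ) < b := lt_of_lt_of_le htpos htb
  have hcc := Real.concaveOn_rpow hθ0.le hθ1.le
  have hmem1 : (b + t) ∈ Set.Ici (0:ℝ) := by
    simp only [Set.mem_Ici]; linarith
  have hmem2 : t ∈ Set.Ici (0:ℝ) := ht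
  have hw1 : (0:ℝ) ≤ (b - t)/b := div_nonneg (by linarith) hb.le
  have hw2 : (0:ℝ) ≤ t/b := div_nonneg ht hb.le
  have h4 : (b - t)/b + t/b = 1 := by field_simp; ring
  have h1 := hcc.2 hmem1 hmem2 hw1 hw2 h4
  have h2 := hcc.2 hmem1 hmem2 hw2 hw1 (by linarith)
  simp only [smul_eq_mul] at h1 h2
  have e1 : ((b - t)/b) * (b+t) + (t/b) * t = b := by field_simp; ring
  have e2 : ((t/b)) * (b+t) + ((b-t)/b) * t = 2 * t := by field_simp; ring
  rw [e1] at h1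
  rw [e2] at h2
  have h3 : (2 * t) ^ θ = 2 ^ θ * t ^ θ := Real.mul_rpow (by norm_num) ht
  rw [h3] at h2
  have h5 := add_le_add h1 h2
  have h6 : (b-t)/b * (b+t)^θ + t/b * t^θ + (t/b * (b+t)^θ + (b-t)/b * t^θ)
      = (b+t)^θ + t^θ := by
    calc (b-t)/b * (b+t)^θ + t/b * t^θ + (t/b * (b+t)^θ + (b-t)/b * t^θ)
        = ((b-t)/b + t/b) * ((b+t)^θ + t^θ) := by ring
      _ = (b+t)^θ + t^θ := by rw [h4, one_mul]
  linarith

lemma lemB {θ : ℝ} (hθ0 : 0 < θ) (hθ1 : θ < 1) :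
    ∀ (M : List ℝ) (b : ℝ), (∀ x ∈ M, 0 ≤ x) → (∀ x ∈ M, x ≤ b) →
    (b + M.sum) ^ θ ≤ b ^ θ + (2 ^ θ - 1) * (M.map (fun x => x ^ θ)).sum := by
  intro M
  induction M with
  | nil => intro b _ _; simp
  | cons x M' ih =>
    intro b h0 hb
    have hx0 : 0 ≤ x := h0 x (by simp)
    have hxb : x ≤ b := hb x (by simp)
    have h0' : ∀ y ∈ M', 0 ≤ y := fun y hy => h0 y (by simp [hy])
    have hb' : ∀ y ∈ M', y ≤ b + x := fun y hy => le_trans (hb y (by simp [hy])) (by linarith)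
    have hIH := ih (b + x) h0' hb'
    have hA : (b + x) ^ θ ≤ b ^ θ + (2 ^ θ - 1) * x ^ θ := lemA hθ0 hθ1 hx0 hxb
    have hcoef : (0:ℝ) ≤ 2 ^ θ - 1 := by
      have : (1:ℝ) ≤ 2 ^ θ := Real.one_le_rpow (by norm_num) hθ0.le
      linarith
    have heq : b + (x :: M').sum = (b + x) + M'.sum := by
      simp only [List.sum_cons]; ring
    rw [heq]
    calc ((b + x) + M'.sum) ^ θ
        ≤ (b + x) ^ θ + (2 ^ θ - 1) * (M'.map (fun x => x ^ θ)).sum := hIH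
      _ ≤ b ^ θ + (2 ^ θ - 1) * x ^ θ + (2 ^ θ - 1) * (M'.map (fun x => x ^ θ)).sum := by
          linarith
      _ = b ^ θ + (2 ^ θ - 1) * ((x :: M').map (fun x => x ^ θ)).sum := by
          simp only [List.map_cons, List.sum_cons]; ring

lemma sum_val (a k k' : ℤ →₀ ℕ) (g : ℝ → ℝ) :
    ((valMultiset a k k').map g).sum
      = ∑ n ∈ a.support ∪ k.support ∪ k'.support,
          ((2 * a n + k n + k' n : ℕ) : ℝ) * g (wR n) := by
  rw [valMultiset, Multiset.map_bind, Multiset.sum_bind, Finset.sum]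
  congr 1
  apply Multiset.map_congr rfl
  intro n _
  simp [Multiset.map_replicate, Multiset.sum_replicate, nsmul_eq_mul]

lemma mem_val {a k k' : ℤ →₀ ℕ} {x : ℝ} (hx : x ∈ valMultiset a k k') :
    ∃ n, n ∈ a.support ∪ k.support ∪ k'.support
      ∧ (2 * a n + k n + k' n) ≠ 0 ∧ x = wR n := by
  rw [valMultiset, Multiset.mem_bind] at hx
  obtain ⟨n, hn, hx⟩ := hx
  rw [Multiset.mem_replicate] at hx
  exact ⟨n, hn, hx.1, hx.2⟩

/-- Key combinatorial claim in the multiplicity-one case. -/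
lemma key_one (a k k' : ℤ →₀ ℕ) (n₁ : ℤ) (ha : a n₁ = 0) (hkk' : k n₁ + k' n₁ = 1)
    (hn₁U : n₁ ∈ a.support ∪ k.support ∪ k'.support) (Msum : ℝ)
    (hM : ∑ n ∈ (a.support ∪ k.support ∪ k'.support).erase n₁,
        ((2 * a n + k n + k' n : ℕ) : ℝ) * wR n ≤ Msum) :
    wR n₁ ≤ mstarR k k' + Msum := by
  classical
  set U := a.support ∪ k.support ∪ k'.support with hU
  set K := k.support ∪ k'.support with hK
  set d : ℤ → ℤ := fun n => (k n : ℤ) - k' n with hd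
  have hn₁K : n₁ ∈ K := by
    simp only [hK, Finset.mem_union, Finsupp.mem_support_iff]
    omega
  have habs : |d n₁| = 1 := by
    have h1 : d n₁ = 1 ∨ d n₁ = -1 := by simp only [hd]; omega
    rcases h1 with h1 | h1 <;> rw [h1] <;> norm_num
  have hmom : momZ k k' = d n₁ * n₁ + ∑ n ∈ K.erase n₁, d n * n := by
    rw [momZ, ← Finset.add_sum_erase K (fun n => d n * n) hn₁K]
  have hdle : ∀ n, |d n| ≤ (k n : ℤ) + k' n := by
    intro n
    simp only [hd]
    rw [abs_le]
    omega
  have hZ : (|n₁| : ℤ) ≤ max 1 |momZ k k'| + ∑ n ∈ K.erase n₁, ((k n : ℤ) + k' n) * |n| := by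
    have h2 : d n₁ * n₁ = momZ k k' - ∑ n ∈ K.erase n₁, d n * n := by
      rw [hmom]; ring
    calc (|n₁| : ℤ) = |d n₁ * n₁| := by rw [abs_mul, habs, one_mul]
      _ = |momZ k k' - ∑ n ∈ K.erase n₁, d n * n| := by rw [h2]
      _ ≤ |momZ k k'| + |∑ n ∈ K.erase n₁, d n * n| := abs_sub _ _
      _ ≤ max 1 |momZ k k'| + ∑ n ∈ K.erase n₁, |d n * n| := by
          gcongr
          · exact le_max_right _ _
          · exact Finset.abs_sum_le_sum_abs _ _
      _ ≤ max 1 |momZ k k'| + ∑ n ∈ K.erase n₁, ((k n : ℤ) + k' n) * |n| := by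
          gcongr with n hn
          rw [abs_mul]
          exact mul_le_mul_of_nonneg_right (hdle n) (abs_nonneg _)
  have hKU : K.erase n₁ ⊆ U.erase n₁ := by
    apply Finset.erase_subset_erase
    intro n hn
    simp only [hK, Finset.mem_union, Finsupp.mem_support_iff] at hn
    simp only [hU, Finset.mem_union, Finsupp.mem_support_iff]
    tauto
  have hlow : ((∑ n ∈ K.erase n₁, ((k n : ℤ) + k' n) * |n| : ℤ) : ℝ) ≤ Msum := by
    refine le_trans ?_ hM
    calc ((∑ n ∈ K.erase n₁, ((k n : ℤ) + k' n) * |n| : ℤ) : ℝ)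
        = ∑ n ∈ K.erase n₁, ((k n : ℝ) + k' n) * |(n : ℝ)| := by push_cast; rfl
      _
        ≤ ∑ n ∈ K.erase n₁, ((2 * a n + k n + k' n : ℕ) : ℝ) * wR n := by
          apply Finset.sum_le_sum
          intro n hn
          apply mul_le_mul _ (abs_le_wR n) (abs_nonneg _) (by positivity)
          push_cast
          linarith
      _ ≤ ∑ n ∈ U.erase n₁, ((2 * a n + k n + k' n : ℕ) : ℝ) * wR n := by
          apply Finset.sum_le_sum_of_subset_of_nonneg hKU
          intro n _ _
          have := one_le_wR n
          positivity
  have hmR : 1 ≤ mstarR k k' := one_le_mstarR k k'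
  have hMsum0 : (0:ℝ) ≤ Msum := by
    refine le_trans ?_ hM
    apply Finset.sum_nonneg
    intro n _
    have := one_le_wR n
    positivity
  rw [wR]
  apply max_le
  · linarith
  · have hcast : |(n₁ : ℝ)| = ((|n₁| : ℤ) : ℝ) := by push_cast; ring
    rw [hcast]
    have hZ' : ((|n₁| : ℤ) : ℝ) ≤ mstarR k k'
        + ((∑ n ∈ K.erase n₁, ((k n : ℤ) + k' n) * |n| : ℤ) : ℝ) := by
      rw [mstarR]
      exact_mod_cast hZ
    linarith

theorem stmt0 (θ : ℝ) (hθ : θ ∈ Set.Ioo (0:ℝ) 1) (a k k' : ℤ →₀ ℕ)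
    (hne : ¬(a = 0 ∧ k = 0 ∧ k' = 0))
    (L : List ℝ) (hsort : L.Pairwise (· ≥ ·))
    (hL : (↑L : Multiset ℝ) = valMultiset a k k') :
    (∑ n ∈ a.support ∪ k.support ∪ k'.support,
        ((2 * a n + k n + k' n : ℕ) : ℝ) * wR n ^ θ)
      - 2 * L.headI ^ θ + mstarR k k' ^ θ
    ≥ (2 - 2 ^ θ) * ((L.drop 2).map (fun x => x ^ θ)).sum := by
  obtain ⟨hθ0, hθ1⟩ := hθ
  classical
  have hmemU : ∀ n : ℤ, 2 * a n + k n + k' n ≠ 0 → n ∈ a.support ∪ k.support ∪ k'.support := by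
    intro n h
    simp only [Finset.mem_union, Finsupp.mem_support_iff]
    omega
  -- L is nonempty
  have hex : ∃ n₀ : ℤ, 2 * a n₀ + k n₀ + k' n₀ ≠ 0 := by
    by_contra h
    push_neg at h
    apply hne
    refine ⟨?_, ?_, ?_⟩ <;> ext n <;> (have := h n) <;>
      simp only [Finsupp.coe_zero, Pi.zero_apply] <;> omega
  obtain ⟨n₀, hn₀⟩ := hex
  have hv : wR n₀ ∈ valMultiset a k k' := by
    rw [valMultiset, Multiset.mem_bind]
    exact ⟨n₀, Finset.mem_def.1 (hmemU n₀ hn₀), Multiset.mem_replicate.2 ⟨hn₀, rfl⟩⟩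
  have hLne : L ≠ [] := by
    intro h
    rw [← hL, h] at hv
    simp at hv
  obtain ⟨x₁, M, rfl⟩ := List.exists_cons_of_ne_nil hLne
  -- all elements are ≥ 1
  have hall1 : ∀ x ∈ (x₁ :: M), (1:ℝ) ≤ x := by
    intro x hx
    have : x ∈ valMultiset a k k' := by
      rw [← hL]; exact hx
    obtain ⟨n, _, _, rfl⟩ := mem_val this
    exact one_le_wR n
  have hx₁1 : (1:ℝ) ≤ x₁ := hall1 x₁ (by simp)
  have hM0 : ∀ y ∈ M, (0:ℝ) ≤ y := fun y hy =>
    le_trans zero_le_one (hall1 y (List.mem_cons_of_mem _ hy))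
  have hMsum0 : (0:ℝ) ≤ M.sum := List.sum_nonneg hM0
  -- sum formula
  have hsumf : ∀ g : ℝ → ℝ,
      g x₁ + (M.map g).sum = ∑ n ∈ a.support ∪ k.support ∪ k'.support,
        ((2 * a n + k n + k' n : ℕ) : ℝ) * g (wR n) := by
    intro g
    have h := sum_val a k k' g
    rw [← hL, Multiset.map_coe, Multiset.sum_coe] at h
    simp only [List.map_cons, List.sum_cons] at h
    exact h
  -- key claim : x₁ ≤ mstar + M.sum
  have hmem_x₁ : x₁ ∈ valMultiset a k k' := by rw [← hL]; simp
  obtain ⟨n₁, hn₁U, hc₁ne, hx₁eq⟩ := mem_val hmem_x₁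
  have hkey : x₁ ≤ mstarR k k' + M.sum := by
    by_cases hc2 : 2 ≤ 2 * a n₁ + k n₁ + k' n₁
    · -- two copies of x₁, so x₁ ∈ M
      have hcount : 2 * a n₁ + k n₁ + k' n₁ ≤ Multiset.count x₁ (valMultiset a k k') := by
        rw [valMultiset]
        obtain ⟨s, hs⟩ := Multiset.exists_cons_of_mem (Finset.mem_def.1 hn₁U)
        rw [hs, Multiset.cons_bind, Multiset.count_add]
        have h1 : Multiset.count x₁ (Multiset.replicate (2 * a n₁ + k n₁ + k' n₁) (wR n₁))
            = 2 * a n₁ + k n₁ + k' n₁ := by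
          rw [hx₁eq, Multiset.count_replicate_self]
        omega
      rw [← hL] at hcount
      have hxM : x₁ ∈ M := by
        rw [← Multiset.cons_coe, Multiset.count_cons_self] at hcount
        have h1 : 1 ≤ Multiset.count x₁ (↑M : Multiset ℝ) := by omega
        exact Multiset.mem_coe.1 (Multiset.count_pos.1 (by omega))
      have := List.single_le_sum hM0 x₁ hxM
      have hm := one_le_mstarR k k'
      linarith
    · -- multiplicity one: comes from k or k'
      have hak : a n₁ = 0 ∧ k n₁ + k' n₁ = 1 := by omega
      -- compute M.sum
      have hid := hsumf id
      simp only [id_eq, List.map_id] at hid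
      rw [← Finset.add_sum_erase (a.support ∪ k.support ∪ k'.support)
        (fun n => ((2 * a n + k n + k' n : ℕ) : ℝ) * wR n) hn₁U] at hid
      have h1 : 2 * a n₁ + k n₁ + k' n₁ = 1 := by omega
      rw [h1, hx₁eq] at hid
      push_cast at hid
      rw [one_mul] at hid
      have hMsum : ∑ n ∈ (a.support ∪ k.support ∪ k'.support).erase n₁,
          ((2 * a n + k n + k' n : ℕ) : ℝ) * wR n ≤ M.sum := by
        push_cast
        linarith
      have := key_one a k k' n₁ hak.1 hak.2 hn₁U M.sum hMsum
      rw [hx₁eq]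
      exact this
  -- now finish
  have hgoalsum := hsumf (fun x => x ^ θ)
  rw [← hgoalsum]
  have hhead : (x₁ :: M).headI = x₁ := rfl
  rw [hhead]
  have hm := one_le_mstarR k k'
  have hmθ : 1 ≤ mstarR k k' ^ θ := Real.one_le_rpow hm hθ0.le
  have h2θ : (2:ℝ) ^ θ ≤ 2 := by
    have := Real.rpow_le_rpow_of_exponent_le (by norm_num : (1:ℝ) ≤ 2) hθ1.le
    rwa [Real.rpow_one] at this
  have h2θ1 : (1:ℝ) ≤ 2 ^ θ := Real.one_le_rpow (by norm_num) hθ0.le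
  rcases M with _ | ⟨x₂, R⟩
  · simp only [List.map_nil, List.sum_nil, List.drop_succ_cons, List.drop_nil,
      List.map_nil, mul_zero] at *
    have hx₁m : x₁ ^ θ ≤ mstarR k k' ^ θ :=
      Real.rpow_le_rpow (by linarith) (by linarith) hθ0.le
    linarith
  · rw [List.pairwise_cons, List.pairwise_cons] at hsort
    have hRle : ∀ y ∈ R, y ≤ x₂ := fun y hy => hsort.2.1 y hy
    have hR0 : ∀ y ∈ R, (0:ℝ) ≤ y := fun y hy => hM0 y (List.mem_cons_of_mem _ hy)
    have hx₂1 : (1:ℝ) ≤ x₂ := hall1 x₂ (by simp)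
    set T := (R.map (fun x => x ^ θ)).sum with hT
    have hT0 : 0 ≤ T := by
      apply List.sum_nonneg
      intro y hy
      simp only [List.mem_map] at hy
      obtain ⟨z, hz, rfl⟩ := hy
      exact Real.rpow_nonneg (hR0 z hz) θ
    have hBB := lemB hθ0 hθ1 R (mstarR k k' + x₂) hR0
      (fun y hy => le_trans (hRle y hy) (by linarith))
    have hmono : x₁ ^ θ ≤ (mstarR k k' + x₂ + R.sum) ^ θ := by
      apply Real.rpow_le_rpow (by linarith) _ hθ0.le
      rw [List.sum_cons] at hkey
      linarith
    have hsub : (mstarR k k' + x₂) ^ θ ≤ mstarR k k' ^ θ + x₂ ^ θ := by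
      have hx₂θ : 0 ≤ x₂ ^ θ := Real.rpow_nonneg (by linarith) θ
      have hmθ0 : 0 ≤ mstarR k k' ^ θ := Real.rpow_nonneg (by linarith) θ
      rcases le_total x₂ (mstarR k k') with h | h
      · have := lemA hθ0 hθ1 (by linarith : (0:ℝ) ≤ x₂) h
        nlinarith
      · have := lemA hθ0 hθ1 (by linarith : (0:ℝ) ≤ mstarR k k') h
        rw [add_comm] at this
        nlinarith
    have hx₁bound : x₁ ^ θ ≤ mstarR k k' ^ θ + x₂ ^ θ + (2 ^ θ - 1) * T := by
      calc x₁ ^ θ ≤ (mstarR k k' + x₂ + R.sum) ^ θ := hmono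
        _ ≤ (mstarR k k' + x₂) ^ θ + (2 ^ θ - 1) * T := hBB
        _ ≤ mstarR k k' ^ θ + x₂ ^ θ + (2 ^ θ - 1) * T := by linarith
    simp only [List.map_cons, List.sum_cons, List.drop_succ_cons, List.drop_zero, ← hT]
    linarith
end

section
/- Let θ ∈ (0,1), let N ≥ 2 be an integer, let x₂ ≥ x₃ ≥ … ≥ x_N > 0 be real numbers and let m ≥ 0. Then ∑_{i=2}^N x_i^θ + m^θ ≥ (∑_{i=2}^N x_i + m)^θ + (2 − 2^θ)·∑_{i=3}^N x_i^θ. -/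
open scoped BigOperators

lemma key_rpow {θ : ℝ} (h0 : 0 < θ) (h1 : θ < 1) {a b : ℝ} (hb : 0 < b) (hab : b ≤ a) :
    (a + b) ^ θ ≤ a ^ θ + (2 ^ θ - 1) * b ^ θ := by
  have ha : 0 < a := hb.trans_le hab
  have hanti : AntitoneOn (fun t : ℝ => (t + b) ^ θ - t ^ θ) (Set.Ici b) := by
    apply antitoneOn_of_deriv_nonpos (convex_Ici b)
    · apply ContinuousOn.sub
      · exact (continuousOn_id.add continuousOn_const).rpow_const
          (fun t ht => Or.inr h0.le)
      · exact continuousOn_id.rpow_const (fun t ht => Or.inr h0.le)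
    · intro t ht
      rw [interior_Ici] at ht
      have htpos : 0 < t := hb.trans ht
      apply DifferentiableAt.differentiableWithinAt
      apply DifferentiableAt.sub
      · exact ((differentiableAt_fun_id.add_const b)).rpow_const
          (Or.inl (by positivity))
      · exact differentiableAt_fun_id.rpow_const (Or.inl htpos.ne')
    · intro t ht
      rw [interior_Ici] at ht
      have htpos : 0 < t := hb.trans ht
      have hd1 : HasDerivAt (fun t : ℝ => (t + b) ^ θ) (θ * (t + b) ^ (θ - 1) * 1)
          t := by
        have := (Real.hasDerivAt_rpow_const (p := θ)
          (x := t + b) (Or.inl (by positivity)))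
        exact this.comp t ((hasDerivAt_id t).add_const b)
      have hd2 : HasDerivAt (fun t : ℝ => t ^ θ) (θ * t ^ (θ - 1)) t :=
        Real.hasDerivAt_rpow_const (Or.inl htpos.ne')
      have : HasDerivAt (fun t : ℝ => (t + b) ^ θ - t ^ θ)
          (θ * (t + b) ^ (θ - 1) * 1 - θ * t ^ (θ - 1)) t := hd1.sub hd2
      rw [this.deriv]
      have hle : (t + b) ^ (θ - 1) ≤ t ^ (θ - 1) :=
        Real.rpow_le_rpow_of_nonpos htpos (by linarith) (by linarith)
      nlinarith
  have hmem1 : a ∈ Set.Ici b := hab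
  have hmem2 : b ∈ Set.Ici b := le_refl b
  have := hanti hmem2 hmem1 hab
  simp only at this
  have h2b : (b + b) ^ θ = 2 ^ θ * b ^ θ := by
    rw [← two_mul, Real.mul_rpow (by norm_num) hb.le]
  rw [h2b] at this
  nlinarith

theorem stmt1 (θ : ℝ) (hθ : θ ∈ Set.Ioo (0:ℝ) 1) (N : ℕ) (hN : 2 ≤ N)
    (x : ℕ → ℝ) (hpos : ∀ i, 2 ≤ i → i ≤ N → 0 < x i)
    (hmono : ∀ i j, 2 ≤ i → i ≤ j → j ≤ N → x j ≤ x i)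
    (m : ℝ) (hm : 0 ≤ m) :
    (∑ i ∈ Finset.Icc 2 N, x i ^ θ) + m ^ θ ≥
      ((∑ i ∈ Finset.Icc 2 N, x i) + m) ^ θ
        + (2 - 2 ^ θ) * ∑ i ∈ Finset.Icc 3 N, x i ^ θ := by
  obtain ⟨h0, h1⟩ := hθ
  have h2θ1 : (1:ℝ) ≤ 2 ^ θ := Real.one_le_rpow (by norm_num) h0.le
  have h2θ2 : (2:ℝ) ^ θ ≤ 2 := by
    calc (2:ℝ) ^ θ ≤ 2 ^ (1:ℝ) :=
          Real.rpow_le_rpow_of_exponent_le (by norm_num) h1.le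
      _ = 2 := Real.rpow_one 2
  -- induction step: (∑_{i=2}^n x_i)^θ ≤ x 2 ^ θ + (2^θ - 1) ∑_{i=3}^n x_i^θ
  have main : ∀ n, 2 ≤ n → n ≤ N →
      (∑ i ∈ Finset.Icc 2 n, x i) ^ θ ≤
        x 2 ^ θ + (2 ^ θ - 1) * ∑ i ∈ Finset.Icc 3 n, x i ^ θ := by
    intro n hn
    induction n, hn using Nat.le_induction with
    | base =>
      intro _
      simp [Finset.Icc_self, show Finset.Icc 3 2 = ∅ from rfl]
    | succ n hn ih =>
      intro hnN
      have hnN' : n ≤ N := by omega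
      have ih' := ih hnN'
      have hsum2 : ∑ i ∈ Finset.Icc 2 (n+1), x i
          = (∑ i ∈ Finset.Icc 2 n, x i) + x (n+1) :=
        Finset.sum_Icc_succ_top (by omega) x
      have hsum3 : ∑ i ∈ Finset.Icc 3 (n+1), x i ^ θ
          = (∑ i ∈ Finset.Icc 3 n, x i ^ θ) + x (n+1) ^ θ :=
        Finset.sum_Icc_succ_top (by omega) _
      have hxpos : 0 < x (n+1) := hpos (n+1) (by omega) hnN
      have hx2 : x (n+1) ≤ x 2 := hmono 2 (n+1) (le_refl 2) (by omega) hnN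
      have hT : x 2 ≤ ∑ i ∈ Finset.Icc 2 n, x i := by
        apply Finset.single_le_sum (f := x)
        · intro i hi
          rw [Finset.mem_Icc] at hi
          exact (hpos i hi.1 (by omega)).le
        · rw [Finset.mem_Icc]; omega
      have hkey := key_rpow h0 h1 hxpos (hx2.trans hT)
      rw [hsum2, hsum3]
      have hxθ : 0 ≤ x (n+1) ^ θ := Real.rpow_nonneg hxpos.le θ
      nlinarith
  have hS : ∑ i ∈ Finset.Icc 2 N, x i ≥ x 2 := by
    apply Finset.single_le_sum (f := x)
    · intro i hi
      rw [Finset.mem_Icc] at hi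
      exact (hpos i hi.1 hi.2).le
    · rw [Finset.mem_Icc]; omega
  have hx2pos : 0 < x 2 := hpos 2 (le_refl 2) hN
  have hSpos : 0 < ∑ i ∈ Finset.Icc 2 N, x i := lt_of_lt_of_le hx2pos hS
  -- subadditivity: (S + m)^θ ≤ S^θ + m^θ
  set S := ∑ i ∈ Finset.Icc 2 N, x i with hSdef
  have hsub : (S + m) ^ θ ≤ S ^ θ + m ^ θ := by
    rcases eq_or_lt_of_le hm with hm0 | hmpos
    · rw [← hm0, add_zero, Real.zero_rpow h0.ne', add_zero]
    · rcases le_total m S with hms | hsm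
      · have := key_rpow h0 h1 hmpos hms
        have hmθ : 0 ≤ m ^ θ := Real.rpow_nonneg hm θ
        nlinarith
      · have := key_rpow h0 h1 hSpos hsm
        have hSθ : 0 ≤ S ^ θ := Real.rpow_nonneg hSpos.le θ
        rw [add_comm S m] at *
        nlinarith
  have hmain := main N (by omega) (le_refl N)
  -- decompose the sum of powers
  have hdec : ∑ i ∈ Finset.Icc 2 N, x i ^ θ
      = x 2 ^ θ + ∑ i ∈ Finset.Icc 3 N, x i ^ θ := by
    have h23 : Finset.Icc 2 N = insert 2 (Finset.Icc 3 N) := by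
      ext i
      simp only [Finset.mem_Icc, Finset.mem_insert]
      omega
    rw [h23, Finset.sum_insert (by simp [Finset.mem_Icc])]
  rw [ge_iff_le, hdec]
  nlinarith
end

section
/- Let θ ∈ (0,1) and let a ≥ b > 0 be real numbers. Then a^θ + b^θ ≥ (a+b)^θ + (2 − 2^θ)·b^θ. -/
theorem stmt2 (θ : ℝ) (hθ : θ ∈ Set.Ioo (0:ℝ) 1) (a b : ℝ) (hb : 0 < b) (hab : b ≤ a) :
    a ^ θ + b ^ θ ≥ (a + b) ^ θ + (2 - 2 ^ θ) * b ^ θ := by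
  obtain ⟨hθ0, hθ1⟩ := hθ
  have ha : 0 < a := hb.trans_le hab
  have hcc := Real.concaveOn_rpow hθ0.le hθ1.le
  set lam := b / a with hlam
  have hlam0 : 0 ≤ lam := by positivity
  have hlam1 : lam ≤ 1 := (div_le_one ha).mpr hab
  have hmemb : (b:ℝ) ∈ Set.Ici (0:ℝ) := le_of_lt hb
  have hmemab : (a + b : ℝ) ∈ Set.Ici (0:ℝ) := by simp [Set.mem_Ici]; linarith
  have h1 : lam * b ^ θ + (1 - lam) * (a + b) ^ θ ≤ (lam * b + (1 - lam) * (a + b)) ^ θ :=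
    hcc.2 hmemb hmemab hlam0 (by linarith) (by ring)
  have h2 : (1 - lam) * b ^ θ + lam * (a + b) ^ θ ≤ ((1 - lam) * b + lam * (a + b)) ^ θ :=
    hcc.2 hmemb hmemab (by linarith) hlam0 (by ring)
  have e1 : lam * b + (1 - lam) * (a + b) = a := by
    field_simp [hlam]; linarith [show lam * a = b from by rw [hlam]; exact div_mul_cancel₀ b ha.ne']
  have e2 : (1 - lam) * b + lam * (a + b) = 2 * b := by
    field_simp [hlam]; linarith [show lam * a = b from by rw [hlam]; exact div_mul_cancel₀ b ha.ne']
  rw [e1] at h1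
  rw [e2] at h2
  have h2b : (2 * b) ^ θ = 2 ^ θ * b ^ θ := by
    rw [Real.mul_rpow (by norm_num) hb.le]
  rw [h2b] at h2
  nlinarith [h1, h2]
end

section
/- Let θ ∈ (0,1), let k, k' : ℤ → ℕ be finitely supported, and let Ṽ : ℤ → ℝ satisfy |Ṽ_n| ≤ 2 for all n ∈ ℤ. Let w(n) = max(1,|n|), let (n_i)_{i≥1} be an arrangement of the finite multiset in which each n ∈ ℤ is repeated k_n + k'_n times, ordered so that w(n₁) ≥ w(n₂) ≥ w(n₃) ≥ …, and set m*(k,k') = max(1, |∑_n (k_n − k'_n)·n|). If |∑_{n∈ℤ} (k_n − k'_n)·(n² + Ṽ_n)| ≤ 1, then ∑_{n∈ℤ} |k_n − k'_n|·w(n)^{θ/2} ≤ 3·8^{θ/2}·( ∑_{i≥3} w(n_i)^θ + m*(k,k')^θ ). -/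
set_option maxHeartbeats 1000000


open scoped BigOperators

lemma wR_nonneg (n : ℤ) : 0 ≤ wR n := zero_le_one.trans (one_le_wR n)

lemma sq_le_wR_sq (n : ℤ) : (n : ℝ) ^ 2 ≤ wR n ^ 2 := by
  nlinarith [abs_le_wR n, sq_abs (n : ℝ), abs_nonneg (n : ℝ), wR_nonneg n]

lemma one_le_wR_sq (n : ℤ) : 1 ≤ wR n ^ 2 := by nlinarith [one_le_wR n]

lemma wR_le_wR_sq (n : ℤ) : wR n ≤ wR n ^ 2 := by nlinarith [one_le_wR n]

lemma wR_le_of_sq {a : ℤ} {E : ℝ} (h1 : 1 ≤ E) (h : (a : ℝ) ^ 2 ≤ E) : wR a ≤ E := by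
  refine max_le h1 ?_
  nlinarith [sq_nonneg (|(a : ℝ)| - 1), sq_abs (a : ℝ), abs_nonneg (a : ℝ)]

lemma list_shape {α : Type*} (l : List α) (h : l.length ≤ 2) :
    l = [] ∨ (∃ x, l = [x]) ∨ ∃ x y, l = [x, y] := by
  match l with
  | [] => exact Or.inl rfl
  | [x] => exact Or.inr (Or.inl ⟨x, rfl⟩)
  | [x, y] => exact Or.inr (Or.inr ⟨x, y, rfl⟩)
  | x :: y :: z :: tl => simp at h

/-- Sum over a finset of count·f equals the list sum of f, provided the list's elements
all lie in the finset. -/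
lemma sum_count_mul {s : Finset ℤ} : ∀ {l : List ℤ}, (∀ n ∈ l, n ∈ s) → ∀ f : ℤ → ℝ,
    ∑ n ∈ s, (l.count n : ℝ) * f n = (l.map f).sum := by
  intro l
  induction l with
  | nil => intro _ f; simp
  | cons a t ih =>
    intro hl f
    have ha : a ∈ s := hl a (by simp)
    have ht : ∀ n ∈ t, n ∈ s := fun n hn => hl n (by simp [hn])
    have heq : ∀ n ∈ s, ((a :: t).count n : ℝ) * f n
        = (t.count n : ℝ) * f n + (if n = a then f n else 0) := by
      intro n _
      by_cases h : n = a
      · subst h; simp [List.count_cons]; ring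
      · simp [List.count_cons, h, Ne.symm h]
    rw [Finset.sum_congr rfl heq, Finset.sum_add_distrib, ih ht f]
    have h2 : (∑ n ∈ s, if n = a then f n else 0) = f a := by
      rw [Finset.sum_ite_eq' s a f, if_pos ha]
    rw [h2]
    simp [add_comm]

/-- Two-term subadditivity of `x ^ p` for `0 ≤ p ≤ 1` on nonnegative reals. -/
lemma real_add_rpow {x y p : ℝ} (hx : 0 ≤ x) (hy : 0 ≤ y) (hp : 0 ≤ p) (hp1 : p ≤ 1) :
    (x + y) ^ p ≤ x ^ p + y ^ p := by
  lift x to NNReal using hx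
  lift y to NNReal using hy
  exact_mod_cast NNReal.rpow_add_le_add_rpow x y hp hp1

/-- List subadditivity of `x ^ p` for `0 < p ≤ 1`. -/
lemma list_rpow_le {p : ℝ} (hp : 0 < p) (hp1 : p ≤ 1) :
    ∀ l : List ℝ, (∀ x ∈ l, 0 ≤ x) → l.sum ^ p ≤ (l.map (fun x => x ^ p)).sum := by
  intro l
  induction l with
  | nil => intro _; simp [Real.zero_rpow hp.ne']
  | cons a t ih =>
    intro h
    have ha : 0 ≤ a := h a (by simp)
    have ht : ∀ x ∈ t, 0 ≤ x := fun x hx => h x (by simp [hx])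
    have hts : 0 ≤ t.sum := List.sum_nonneg ht
    calc (a :: t).sum ^ p = (a + t.sum) ^ p := by simp
      _ ≤ a ^ p + t.sum ^ p := real_add_rpow ha hts hp.le hp1
      _ ≤ a ^ p + (t.map (fun x => x ^ p)).sum := by linarith [ih ht]
      _ = ((a :: t).map (fun x => x ^ p)).sum := by simp

/-- Key two-value estimate. -/
lemma key2 (x y : ℤ) (hxy : x ≠ y) (ρx ρy S2 M : ℝ) (hS2 : 0 ≤ S2) (hM : 1 ≤ M)
    (hx : ρx = 1 ∨ ρx = -1) (hy : ρy = 1 ∨ ρy = 0 ∨ ρy = -1)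
    (h2 : |ρx * (x : ℝ) ^ 2 + ρy * (y : ℝ) ^ 2| ≤ 5 + 3 * S2)
    (h1 : |ρx * (x : ℝ) + ρy * (y : ℝ)| ≤ M + S2) :
    wR x ≤ 5 * (S2 + M ^ 2) := by
  have hE1 : (1 : ℝ) ≤ 5 * (S2 + M ^ 2) := by nlinarith
  -- the "opposite signs" core argument
  have core : |(x : ℝ) ^ 2 - (y : ℝ) ^ 2| ≤ 5 + 3 * S2 →
      |(x : ℝ) - (y : ℝ)| ≤ M + S2 → wR x ≤ 5 * (S2 + M ^ 2) := by
    intro hA hB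
    have hxy1 : (1 : ℝ) ≤ |(x : ℝ) - (y : ℝ)| := by
      have h := Int.one_le_abs (sub_ne_zero.mpr hxy)
      have he : ((|x - y| : ℤ) : ℝ) = |(x : ℝ) - (y : ℝ)| := by
        rw [Int.cast_abs]; push_cast; ring_nf
      rw [← he]; exact_mod_cast h
    have hmul : |(x : ℝ) + (y : ℝ)| * |(x : ℝ) - (y : ℝ)| = |(x : ℝ) ^ 2 - (y : ℝ) ^ 2| := by
      rw [← abs_mul]; ring_nf
    have hsum : |(x : ℝ) + (y : ℝ)| ≤ 5 + 3 * S2 := by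
      nlinarith [abs_nonneg ((x : ℝ) + y), abs_nonneg ((x : ℝ) - y)]
    have h2x : 2 * |(x : ℝ)| ≤ |(x : ℝ) + y| + |(x : ℝ) - y| := by
      have h := abs_add_le ((x : ℝ) + y) ((x : ℝ) - y)
      have e : (x : ℝ) + y + ((x : ℝ) - y) = 2 * x := by ring
      rw [e, abs_mul] at h
      simpa using h
    refine max_le hE1 ?_
    nlinarith [sq_nonneg (M - 1)]
  -- cases where we get x² directly
  have sq_case : (x : ℝ) ^ 2 ≤ 5 + 3 * S2 → wR x ≤ 5 * (S2 + M ^ 2) := by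
    intro h
    exact wR_le_of_sq hE1 (by nlinarith)
  rcases hx with rfl | rfl <;> rcases hy with rfl | rfl | rfl
  · refine sq_case ?_
    have := abs_le.mp h2
    nlinarith [sq_nonneg (y : ℝ)]
  · refine sq_case ?_
    have := abs_le.mp h2
    nlinarith
  · refine core ?_ ?_
    · have e : (1 : ℝ) * (x : ℝ) ^ 2 + (-1) * (y : ℝ) ^ 2 = (x : ℝ) ^ 2 - (y : ℝ) ^ 2 := by ring
      rwa [e] at h2
    · have e : (1 : ℝ) * (x : ℝ) + (-1) * (y : ℝ) = (x : ℝ) - (y : ℝ) := by ring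
      rwa [e] at h1
  · refine core ?_ ?_
    · have e : (-1 : ℝ) * (x : ℝ) ^ 2 + 1 * (y : ℝ) ^ 2 = -((x : ℝ) ^ 2 - (y : ℝ) ^ 2) := by ring
      rw [e, abs_neg] at h2; exact h2
    · have e : (-1 : ℝ) * (x : ℝ) + 1 * (y : ℝ) = -((x : ℝ) - (y : ℝ)) := by ring
      rw [e, abs_neg] at h1; exact h1
  · refine sq_case ?_
    have := abs_le.mp h2
    nlinarith
  · refine sq_case ?_
    have := abs_le.mp h2
    nlinarith [sq_nonneg (y : ℝ)]

theorem stmt4 (θ : ℝ) (hθ : θ ∈ Set.Ioo (0:ℝ) 1) (k k' : ℤ →₀ ℕ)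
    (V : ℤ → ℝ) (hV : ∀ n : ℤ, |V n| ≤ 2)
    -- `L` is an arrangement of the multiset in which each `n` is repeated `kₙ + k'ₙ` times,
    -- ordered so that `w(n₁) ≥ w(n₂) ≥ ⋯`
    (L : List ℤ) (hsort : (L.map wR).Pairwise (· ≥ ·))
    (hL : (↑L : Multiset ℤ) = (k.support ∪ k'.support).val.bind
        (fun n => Multiset.replicate (k n + k' n) n))
    (hsmall : |∑ n ∈ k.support ∪ k'.support,
        ((k n : ℝ) - (k' n : ℝ)) * ((n : ℝ) ^ 2 + V n)| ≤ 1) :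
    (∑ n ∈ k.support ∪ k'.support, |(k n : ℝ) - (k' n : ℝ)| * wR n ^ (θ / 2))
      ≤ 3 * 8 ^ (θ / 2) *
        (((L.drop 2).map (fun n => wR n ^ θ)).sum + mstarR k k' ^ θ) := by
  obtain ⟨hθ0, hθ1⟩ := hθ
  set s := k.support ∪ k'.support with hs
  set t2 := L.take 2 with ht2def
  set r2 := L.drop 2 with hr2def
  set M := mstarR k k' with hMdef
  have hM1 : (1 : ℝ) ≤ M := by
    rw [hMdef]; unfold mstarR
    exact_mod_cast (le_max_left 1 |momZ k k'| : (1 : ℤ) ≤ _)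
  have hmomle : |((momZ k k' : ℤ) : ℝ)| ≤ M := by
    rw [hMdef]; unfold mstarR
    rw [← Int.cast_abs]
    exact_mod_cast (le_max_right 1 |momZ k k'| : |momZ k k'| ≤ _)
  -- counting facts
  have hcount : ∀ n : ℤ, L.count n = if n ∈ s then k n + k' n else 0 := by
    intro n
    have h := congrArg (Multiset.count n) hL
    rw [Multiset.coe_count, Multiset.count_bind] at h
    rw [h]
    have h1 : (Multiset.map (fun b => Multiset.count n (Multiset.replicate (k b + k' b) b))
        s.val).sum = ∑ b ∈ s, if b = n then k b + k' b else 0 := by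
      rw [Finset.sum_eq_multiset_sum]
      congr 1
      apply Multiset.map_congr rfl
      intro b _
      rw [Multiset.count_replicate]
    rw [h1, Finset.sum_ite_eq' s n (fun b => k b + k' b)]
  have hmemL : ∀ n ∈ L, n ∈ s := by
    intro n hn
    by_contra h
    have hc := hcount n
    rw [if_neg h] at hc
    exact (List.count_eq_zero.mp hc) hn
  have hmemt2 : ∀ n ∈ t2, n ∈ s := fun n hn => hmemL n ((List.take_sublist 2 L).subset hn)
  have hmemr2 : ∀ n ∈ r2, n ∈ s := fun n hn => hmemL n ((List.drop_sublist 2 L).subset hn)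
  have hL2 : L = t2 ++ r2 := by rw [ht2def, hr2def, List.take_append_drop]
  have hcnt_split : ∀ n : ℤ, L.count n = t2.count n + r2.count n := by
    intro n; rw [hL2, List.count_append]
  have hct_sum : ∀ n ∈ s, k n + k' n = t2.count n + r2.count n := by
    intro n hn
    have h := hcount n
    rw [if_pos hn] at h
    rw [← h, hcnt_split]
  have hlen_t2 : t2.length ≤ 2 := by
    rw [ht2def, List.length_take]; exact min_le_left _ _
  -- the integer functions
  set dz : ℤ → ℤ := fun n => (k n : ℤ) - k' n with hdzdef
  set del : ℤ → ℤ := fun n => if k n = k' n then 0 else (t2.count n : ℤ) with hdeldef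
  set ρ : ℤ → ℤ := fun n => max (min (dz n) (del n)) (-(del n)) with hρdef
  have hfacts : ∀ n ∈ s, |ρ n| ≤ del n ∧ |dz n - ρ n| ≤ (r2.count n : ℤ) ∧
      |dz n| ≤ |ρ n| + (r2.count n : ℤ) := by
    intro n hn
    have hc := hct_sum n hn
    simp only [hρdef, hdeldef, hdzdef]
    split_ifs with h
    · simp only [h]
      simp only [Int.abs_eq_natAbs]
      omega
    · have h' : (k n : ℤ) ≠ (k' n : ℤ) := by exact_mod_cast h
      simp only [Int.abs_eq_natAbs]
      omega
  have hsupp : ∀ n, ρ n ≠ 0 → k n ≠ k' n ∧ 0 < t2.count n := by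
    intro n hρn
    simp only [hρdef, hdeldef] at hρn
    constructor
    · intro h; rw [if_pos h] at hρn; simp at hρn
    · by_contra h
      have h0 : t2.count n = 0 := by omega
      rw [h0] at hρn
      split_ifs at hρn <;> simp at hρn
  have habs1 : ∀ n, k n ≠ k' n → 0 < t2.count n → 1 ≤ |ρ n| := by
    intro n h hc
    have h' : (k n : ℤ) ≠ (k' n : ℤ) := by exact_mod_cast h
    simp only [hρdef, hdeldef, hdzdef, if_neg h]
    simp only [Int.abs_eq_natAbs]
    omega
  have htriple : ∀ n, t2.count n ≤ 1 → ρ n = 1 ∨ ρ n = 0 ∨ ρ n = -1 := by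
    intro n hc
    simp only [hρdef, hdeldef, hdzdef]
    split_ifs with h
    · simp
    · have h' : (k n : ℤ) ≠ (k' n : ℤ) := by exact_mod_cast h
      omega
  have hρ_le_ct : ∀ n, |ρ n| ≤ (t2.count n : ℤ) := by
    intro n
    simp only [hρdef, hdeldef]
    split_ifs with h <;> (simp only [Int.abs_eq_natAbs]; omega)
  -- real sums over counts
  have hsum_r2 : ∀ f : ℤ → ℝ, ∑ n ∈ s, (r2.count n : ℝ) * f n = (r2.map f).sum :=
    fun f => sum_count_mul hmemr2 f
  have hsum_t2 : ∀ f : ℤ → ℝ, ∑ n ∈ s, (t2.count n : ℝ) * f n = (t2.map f).sum :=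
    fun f => sum_count_mul hmemt2 f
  set S2 : ℝ := (r2.map (fun n => wR n ^ 2)).sum with hS2def
  set SS : ℝ := (r2.map (fun n => wR n ^ θ)).sum with hSSdef
  have hS2_eq : ∑ n ∈ s, (r2.count n : ℝ) * wR n ^ 2 = S2 := hsum_r2 _
  have hSS_eq : ∑ n ∈ s, (r2.count n : ℝ) * wR n ^ θ = SS := hsum_r2 _
  have hS2_nonneg : 0 ≤ S2 := by
    rw [hS2def]
    apply List.sum_nonneg
    intro x hx
    simp only [List.mem_map] at hx
    obtain ⟨n, _, rfl⟩ := hx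
    positivity
  have hSS_nonneg : 0 ≤ SS := by
    rw [hSSdef]
    apply List.sum_nonneg
    intro x hx
    simp only [List.mem_map] at hx
    obtain ⟨n, _, rfl⟩ := hx
    exact Real.rpow_nonneg (wR_nonneg n) θ
  have hconst_r2 : ∑ n ∈ s, (r2.count n : ℝ) * 1 = (r2.length : ℝ) := by
    rw [hsum_r2, List.map_const', List.sum_replicate]
    simp
  have hlen_r2 : (r2.length : ℝ) ≤ S2 := by
    rw [← hconst_r2, ← hS2_eq]
    apply Finset.sum_le_sum
    intro n _
    have h1 : (0:ℝ) ≤ (r2.count n : ℝ) := by positivity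
    nlinarith [one_le_wR_sq n]
  have hsum_ct : ∑ n ∈ s, (t2.count n : ℝ) * 1 ≤ 2 := by
    rw [hsum_t2, List.map_const', List.sum_replicate]
    simp only [nsmul_eq_mul, mul_one]
    exact_mod_cast hlen_t2
  -- cast
  have hcast : ∀ n : ℤ, ((dz n : ℤ) : ℝ) = (k n : ℝ) - k' n := by
    intro n; simp only [hdzdef]; push_cast; ring
  -- bound on sum of |dz|
  have hsum_abs_dz : ∑ n ∈ s, |((dz n : ℤ) : ℝ)| ≤ 2 + S2 := by
    have hpt : ∀ n ∈ s, |((dz n : ℤ) : ℝ)| ≤ (t2.count n : ℝ) * 1 + (r2.count n : ℝ) * 1 := by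
      intro n hn
      have hc := hct_sum n hn
      have h1 : |dz n| ≤ (t2.count n : ℤ) + (r2.count n : ℤ) := by
        simp only [hdzdef, Int.abs_eq_natAbs]
        omega
      rw [← Int.cast_abs, mul_one, mul_one]
      exact_mod_cast h1
    calc ∑ n ∈ s, |((dz n : ℤ) : ℝ)|
        ≤ ∑ n ∈ s, ((t2.count n : ℝ) * 1 + (r2.count n : ℝ) * 1) := Finset.sum_le_sum hpt
      _ = ∑ n ∈ s, (t2.count n : ℝ) * 1 + ∑ n ∈ s, (r2.count n : ℝ) * 1 :=
          Finset.sum_add_distrib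
      _ ≤ 2 + S2 := by
          rw [hconst_r2]
          linarith [hsum_ct, hlen_r2]
  -- the quadratic bound
  have hQ : |∑ n ∈ s, ((dz n : ℤ) : ℝ) * (n : ℝ) ^ 2| ≤ 5 + 2 * S2 := by
    have hsmall' : |∑ n ∈ s, ((dz n : ℤ) : ℝ) * ((n : ℝ) ^ 2 + V n)| ≤ 1 := by
      have h1 : ∀ n ∈ s, ((dz n : ℤ) : ℝ) * ((n : ℝ) ^ 2 + V n)
          = ((k n : ℝ) - (k' n : ℝ)) * ((n : ℝ) ^ 2 + V n) := by
        intro n _; rw [hcast n]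
      rw [Finset.sum_congr rfl h1]
      exact hsmall
    have hsplit : ∑ n ∈ s, ((dz n : ℤ) : ℝ) * (n : ℝ) ^ 2
        = ∑ n ∈ s, ((dz n : ℤ) : ℝ) * ((n : ℝ) ^ 2 + V n)
          - ∑ n ∈ s, ((dz n : ℤ) : ℝ) * V n := by
      rw [← Finset.sum_sub_distrib]
      apply Finset.sum_congr rfl
      intro n _; ring
    have hV' : |∑ n ∈ s, ((dz n : ℤ) : ℝ) * V n| ≤ 2 * (2 + S2) := by
      calc |∑ n ∈ s, ((dz n : ℤ) : ℝ) * V n| ≤ ∑ n ∈ s, |((dz n : ℤ) : ℝ) * V n| :=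
            Finset.abs_sum_le_sum_abs _ _
        _ ≤ ∑ n ∈ s, |((dz n : ℤ) : ℝ)| * 2 := by
            apply Finset.sum_le_sum
            intro n _
            rw [abs_mul]
            exact mul_le_mul_of_nonneg_left (hV n) (abs_nonneg _)
        _ = 2 * ∑ n ∈ s, |((dz n : ℤ) : ℝ)| := by rw [← Finset.sum_mul]; ring
        _ ≤ 2 * (2 + S2) := by linarith [hsum_abs_dz]
    rw [hsplit]
    calc |∑ n ∈ s, ((dz n : ℤ) : ℝ) * ((n : ℝ) ^ 2 + V n) - ∑ n ∈ s, ((dz n : ℤ) : ℝ) * V n|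
        ≤ |∑ n ∈ s, ((dz n : ℤ) : ℝ) * ((n : ℝ) ^ 2 + V n)|
          + |∑ n ∈ s, ((dz n : ℤ) : ℝ) * V n| := abs_sub _ _
      _ ≤ 1 + 2 * (2 + S2) := add_le_add hsmall' hV'
      _ = 5 + 2 * S2 := by ring
  -- difference bounds
  have hdiff : ∀ g : ℤ → ℝ, (∀ n, |g n| ≤ wR n ^ 2) →
      |∑ n ∈ s, ((ρ n : ℤ) : ℝ) * g n - ∑ n ∈ s, ((dz n : ℤ) : ℝ) * g n| ≤ S2 := by
    intro g hg
    rw [← Finset.sum_sub_distrib]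
    calc |∑ n ∈ s, (((ρ n : ℤ) : ℝ) * g n - ((dz n : ℤ) : ℝ) * g n)|
        ≤ ∑ n ∈ s, |((ρ n : ℤ) : ℝ) * g n - ((dz n : ℤ) : ℝ) * g n| :=
          Finset.abs_sum_le_sum_abs _ _
      _ ≤ ∑ n ∈ s, (r2.count n : ℝ) * wR n ^ 2 := by
          apply Finset.sum_le_sum
          intro n hn
          have hf := (hfacts n hn).2.1
          have h1 : |((ρ n : ℤ) : ℝ) - ((dz n : ℤ) : ℝ)| ≤ (r2.count n : ℝ) := by
            have h2 : |ρ n - dz n| ≤ (r2.count n : ℤ) := by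
              rw [abs_sub_comm]; exact hf
            have h3 : |((ρ n : ℤ) : ℝ) - ((dz n : ℤ) : ℝ)| = ((|ρ n - dz n| : ℤ) : ℝ) := by
              rw [Int.cast_abs]; push_cast; ring_nf
            rw [h3]
            exact_mod_cast h2
          calc |((ρ n : ℤ) : ℝ) * g n - ((dz n : ℤ) : ℝ) * g n|
              = |((ρ n : ℤ) : ℝ) - ((dz n : ℤ) : ℝ)| * |g n| := by rw [← abs_mul]; ring_nf
            _ ≤ (r2.count n : ℝ) * wR n ^ 2 :=
                mul_le_mul h1 (hg n) (abs_nonneg _) (by positivity)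
      _ = S2 := hS2_eq
  have hP2 : |∑ n ∈ s, ((ρ n : ℤ) : ℝ) * (n : ℝ) ^ 2| ≤ 5 + 3 * S2 := by
    have hd := hdiff (fun n => (n : ℝ) ^ 2) (fun n => by
      rw [abs_of_nonneg (sq_nonneg _)]; exact sq_le_wR_sq n)
    have h := abs_add_le (∑ n ∈ s, ((ρ n : ℤ) : ℝ) * (n : ℝ) ^ 2
      - ∑ n ∈ s, ((dz n : ℤ) : ℝ) * (n : ℝ) ^ 2) (∑ n ∈ s, ((dz n : ℤ) : ℝ) * (n : ℝ) ^ 2)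
    simp only [sub_add_cancel] at h
    calc |∑ n ∈ s, ((ρ n : ℤ) : ℝ) * (n : ℝ) ^ 2| ≤ _ := h
      _ ≤ S2 + (5 + 2 * S2) := add_le_add hd hQ
      _ = 5 + 3 * S2 := by ring
  have hmom : ∑ n ∈ s, ((dz n : ℤ) : ℝ) * (n : ℝ) = ((momZ k k' : ℤ) : ℝ) := by
    unfold momZ
    push_cast
    rw [← hs]
    apply Finset.sum_congr rfl
    intro n _
    rw [hcast n]
  have hP1 : |∑ n ∈ s, ((ρ n : ℤ) : ℝ) * (n : ℝ)| ≤ M + S2 := by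
    have hd := hdiff (fun n => (n : ℝ)) (fun n => (abs_le_wR n).trans (wR_le_wR_sq n))
    have h := abs_add_le (∑ n ∈ s, ((ρ n : ℤ) : ℝ) * (n : ℝ)
      - ∑ n ∈ s, ((dz n : ℤ) : ℝ) * (n : ℝ)) (∑ n ∈ s, ((dz n : ℤ) : ℝ) * (n : ℝ))
    simp only [sub_add_cancel] at h
    calc |∑ n ∈ s, ((ρ n : ℤ) : ℝ) * (n : ℝ)| ≤ _ := h
      _ ≤ S2 + M := by
          refine add_le_add hd ?_
          rw [hmom]
          exact hmomle
      _ = M + S2 := by ring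
  -- Claim A
  have claimA : ∀ a : ℤ, ρ a ≠ 0 → wR a ≤ 5 * (S2 + M ^ 2) := by
    intro a ha
    obtain ⟨hact, htc⟩ := hsupp a ha
    have hat2 : a ∈ t2 := List.count_pos_iff.mp htc
    have has : a ∈ s := hmemt2 a hat2
    have habsa : 1 ≤ |ρ a| := habs1 a hact htc
    -- single-value helper
    have key1 : (∀ b : ℤ, b ≠ a → ρ b = 0) → wR a ≤ 5 * (S2 + M ^ 2) := by
      intro hzero
      have hsum : ∑ n ∈ s, ((ρ n : ℤ) : ℝ) * (n : ℝ) ^ 2 = ((ρ a : ℤ) : ℝ) * (a : ℝ) ^ 2 := by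
        apply Finset.sum_eq_single_of_mem a has
        intro b _ hb
        rw [hzero b hb]
        simp
      have h1' : (1 : ℝ) ≤ |((ρ a : ℤ) : ℝ)| := by
        rw [← Int.cast_abs]
        exact_mod_cast habsa
      have h2 : (a : ℝ) ^ 2 ≤ 5 + 3 * S2 := by
        have hp := hP2
        rw [hsum, abs_mul, abs_of_nonneg (sq_nonneg ((a : ℝ)))] at hp
        nlinarith [sq_nonneg ((a : ℝ))]
      exact wR_le_of_sq (by nlinarith) (by nlinarith)
    rcases list_shape t2 hlen_t2 with ht2 | ⟨x, ht2⟩ | ⟨x, y, ht2⟩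
    · rw [ht2] at hat2; simp at hat2
    · -- t2 = [x]
      apply key1
      intro b hb
      by_contra hρb
      have hbt := (hsupp b hρb).2
      rw [ht2] at hbt
      have hbx : b = x := by
        have := List.count_pos_iff.mp hbt
        simpa using this
      have hax : a = x := by
        rw [ht2] at hat2; simpa using hat2
      exact hb (hbx.trans hax.symm)
    · -- t2 = [x, y]
      by_cases hxy : x = y
      · subst hxy
        apply key1
        intro b hb
        by_contra hρb
        have hbt := (hsupp b hρb).2
        rw [ht2] at hbt
        have hbx : b = x := by
          have := List.count_pos_iff.mp hbt
          simpa using this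
        have hax : a = x := by
          rw [ht2] at hat2
          simpa using hat2
        exact hb (hbx.trans hax.symm)
      · -- two distinct values
        have hxt2 : x ∈ t2 := by rw [ht2]; simp
        have hyt2 : y ∈ t2 := by rw [ht2]; simp
        have hxs : x ∈ s := hmemt2 x hxt2
        have hys : y ∈ s := hmemt2 y hyt2
        have hctx : t2.count x ≤ 1 := by
          rw [ht2]; simp [List.count_cons, hxy, Ne.symm hxy]
        have hcty : t2.count y ≤ 1 := by
          rw [ht2]; simp [List.count_cons, hxy, Ne.symm hxy]
        have hρx := htriple x hctx
        have hρy := htriple y hcty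
        have hsumg : ∀ g : ℤ → ℝ, ∑ n ∈ s, ((ρ n : ℤ) : ℝ) * g n
            = ((ρ x : ℤ) : ℝ) * g x + ((ρ y : ℤ) : ℝ) * g y := by
          intro g
          have hsub : ({x, y} : Finset ℤ) ⊆ s := by
            intro b hb
            simp only [Finset.mem_insert, Finset.mem_singleton] at hb
            rcases hb with rfl | rfl
            · exact hxs
            · exact hys
          have hzero : ∀ b ∈ s, b ∉ ({x, y} : Finset ℤ) → ((ρ b : ℤ) : ℝ) * g b = 0 := by
            intro b _ hb
            simp only [Finset.mem_insert, Finset.mem_singleton] at hb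
            push_neg at hb
            by_contra hne
            have hρb : ρ b ≠ 0 := by
              intro h0
              rw [h0] at hne
              simp at hne
            have hbt := (hsupp b hρb).2
            rw [ht2] at hbt
            have hmem := List.count_pos_iff.mp hbt
            simp only [List.mem_cons, List.not_mem_nil, or_false] at hmem
            tauto
          rw [← Finset.sum_subset hsub hzero, Finset.sum_pair hxy]
        have h2' : |((ρ x : ℤ) : ℝ) * (x : ℝ) ^ 2 + ((ρ y : ℤ) : ℝ) * (y : ℝ) ^ 2|
            ≤ 5 + 3 * S2 := by
          rw [← hsumg (fun n => (n : ℝ) ^ 2)]; exact hP2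
        have h1' : |((ρ x : ℤ) : ℝ) * (x : ℝ) + ((ρ y : ℤ) : ℝ) * (y : ℝ)| ≤ M + S2 := by
          rw [← hsumg (fun n => (n : ℝ))]; exact hP1
        have hcastρ : ∀ b : ℤ, ρ b = 1 ∨ ρ b = 0 ∨ ρ b = -1 →
            ((ρ b : ℤ) : ℝ) = 1 ∨ ((ρ b : ℤ) : ℝ) = 0 ∨ ((ρ b : ℤ) : ℝ) = -1 := by
          intro b hb
          rcases hb with h | h | h <;> rw [h] <;> norm_num
        have hamem : a = x ∨ a = y := by
          rw [ht2] at hat2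
          simpa using hat2
        rcases hamem with rfl | rfl
        · have hρx1 : ((ρ a : ℤ) : ℝ) = 1 ∨ ((ρ a : ℤ) : ℝ) = -1 := by
            rcases hρx with h | h | h
            · left; rw [h]; norm_num
            · exfalso; rw [h] at habsa; simp at habsa
            · right; rw [h]; norm_num
          exact key2 a y hxy _ _ S2 M hS2_nonneg hM1 hρx1 (hcastρ y hρy) h2' h1'
        · have hρy1 : ((ρ a : ℤ) : ℝ) = 1 ∨ ((ρ a : ℤ) : ℝ) = -1 := by
            rcases hρy with h | h | h
            · left; rw [h]; norm_num
            · exfalso; rw [h] at habsa; simp at habsa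
            · right; rw [h]; norm_num
          have h2'' : |((ρ a : ℤ) : ℝ) * (a : ℝ) ^ 2 + ((ρ x : ℤ) : ℝ) * (x : ℝ) ^ 2|
              ≤ 5 + 3 * S2 := by
            rw [add_comm]; exact h2'
          have h1'' : |((ρ a : ℤ) : ℝ) * (a : ℝ) + ((ρ x : ℤ) : ℝ) * (x : ℝ)| ≤ M + S2 := by
            rw [add_comm]; exact h1'
          exact key2 a x (Ne.symm hxy) _ _ S2 M hS2_nonneg hM1 hρy1 (hcastρ x hρx) h2'' h1''
  -- put everything together
  set C : ℝ := (5 * (S2 + M ^ 2)) ^ (θ / 2) with hCdef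
  have hC_nonneg : 0 ≤ C := Real.rpow_nonneg (by nlinarith) _
  have hθ2 : (0 : ℝ) ≤ θ / 2 := by linarith
  have hpt : ∀ n ∈ s, |(k n : ℝ) - k' n| * wR n ^ (θ / 2)
      ≤ ((|ρ n| : ℤ) : ℝ) * C + (r2.count n : ℝ) * wR n ^ θ := by
    intro n hn
    have hwp : (0:ℝ) ≤ wR n ^ (θ / 2) := Real.rpow_nonneg (wR_nonneg n) _
    have hwθ : wR n ^ (θ / 2) ≤ wR n ^ θ :=
      Real.rpow_le_rpow_of_exponent_le (one_le_wR n) (by linarith)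
    have hdzb : |(k n : ℝ) - k' n| ≤ ((|ρ n| : ℤ) : ℝ) + (r2.count n : ℝ) := by
      rw [← hcast n, ← Int.cast_abs]
      exact_mod_cast (hfacts n hn).2.2
    by_cases hρ0 : ρ n = 0
    · have h0 : ((|ρ n| : ℤ) : ℝ) = 0 := by rw [hρ0]; simp
      calc |(k n : ℝ) - k' n| * wR n ^ (θ / 2)
          ≤ ((r2.count n : ℝ)) * wR n ^ (θ / 2) := by
            apply mul_le_mul_of_nonneg_right _ hwp
            rw [h0] at hdzb; linarith
        _ ≤ (r2.count n : ℝ) * wR n ^ θ :=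
            mul_le_mul_of_nonneg_left hwθ (by positivity)
        _ ≤ ((|ρ n| : ℤ) : ℝ) * C + (r2.count n : ℝ) * wR n ^ θ := by
            rw [h0]; simp
    · have hwC : wR n ^ (θ / 2) ≤ C :=
        Real.rpow_le_rpow (wR_nonneg n) (claimA n hρ0) hθ2
      have hρnn : (0:ℝ) ≤ ((|ρ n| : ℤ) : ℝ) := by positivity
      calc |(k n : ℝ) - k' n| * wR n ^ (θ / 2)
          ≤ (((|ρ n| : ℤ) : ℝ) + (r2.count n : ℝ)) * wR n ^ (θ / 2) :=
            mul_le_mul_of_nonneg_right hdzb hwp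
        _ = ((|ρ n| : ℤ) : ℝ) * wR n ^ (θ / 2) + (r2.count n : ℝ) * wR n ^ (θ / 2) := by ring
        _ ≤ ((|ρ n| : ℤ) : ℝ) * C + (r2.count n : ℝ) * wR n ^ θ := by
            apply add_le_add
            · exact mul_le_mul_of_nonneg_left hwC hρnn
            · exact mul_le_mul_of_nonneg_left hwθ (by positivity)
  have hsum_ρ : ∑ n ∈ s, ((|ρ n| : ℤ) : ℝ) ≤ 2 := by
    calc ∑ n ∈ s, ((|ρ n| : ℤ) : ℝ) ≤ ∑ n ∈ s, (t2.count n : ℝ) * 1 := by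
          apply Finset.sum_le_sum
          intro n _
          rw [mul_one]
          exact_mod_cast hρ_le_ct n
      _ ≤ 2 := hsum_ct
  have hmain : (∑ n ∈ s, |(k n : ℝ) - k' n| * wR n ^ (θ / 2)) ≤ 2 * C + SS := by
    calc (∑ n ∈ s, |(k n : ℝ) - k' n| * wR n ^ (θ / 2))
        ≤ ∑ n ∈ s, (((|ρ n| : ℤ) : ℝ) * C + (r2.count n : ℝ) * wR n ^ θ) :=
          Finset.sum_le_sum hpt
      _ = (∑ n ∈ s, ((|ρ n| : ℤ) : ℝ)) * C + ∑ n ∈ s, (r2.count n : ℝ) * wR n ^ θ := by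
          rw [Finset.sum_add_distrib, Finset.sum_mul]
      _ ≤ 2 * C + SS := by
          rw [hSS_eq]
          apply add_le_add_left
          exact mul_le_mul_of_nonneg_right hsum_ρ hC_nonneg
  -- bound C
  have hCb : C ≤ 8 ^ (θ / 2) * (SS + M ^ θ) := by
    have hM2 : (0:ℝ) ≤ S2 + M ^ 2 := by nlinarith
    have e5 : C = 5 ^ (θ / 2) * (S2 + M ^ 2) ^ (θ / 2) := by
      rw [hCdef, Real.mul_rpow (by norm_num) hM2]
    have h5 : (5:ℝ) ^ (θ / 2) ≤ 8 ^ (θ / 2) :=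
      Real.rpow_le_rpow (by norm_num) (by norm_num) hθ2
    have hsub : (S2 + M ^ 2) ^ (θ / 2) ≤ S2 ^ (θ / 2) + (M ^ 2) ^ (θ / 2) :=
      real_add_rpow hS2_nonneg (by positivity) hθ2 (by linarith)
    have hM0 : (0:ℝ) ≤ M := by linarith
    have hMp : (M ^ 2) ^ (θ / 2) = M ^ θ := by
      rw [← Real.rpow_natCast M 2, ← Real.rpow_mul hM0]
      congr 1
      push_cast
      ring
    have hS2p : S2 ^ (θ / 2) ≤ SS := by
      have hl := list_rpow_le (by linarith : (0:ℝ) < θ / 2) (by linarith)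
        (r2.map (fun n => wR n ^ 2)) (by
          intro x hx
          simp only [List.mem_map] at hx
          obtain ⟨n, _, rfl⟩ := hx
          positivity)
      rw [← hS2def] at hl
      refine hl.trans (le_of_eq ?_)
      rw [List.map_map, hSSdef]
      congr 1
      apply List.map_congr_left
      intro n _
      show (wR n ^ 2) ^ (θ / 2) = wR n ^ θ
      rw [← Real.rpow_natCast (wR n) 2, ← Real.rpow_mul (wR_nonneg n)]
      congr 1
      push_cast
      ring
    calc C = 5 ^ (θ / 2) * (S2 + M ^ 2) ^ (θ / 2) := e5
      _ ≤ 8 ^ (θ / 2) * (S2 ^ (θ / 2) + (M ^ 2) ^ (θ / 2)) :=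
          mul_le_mul h5 hsub (Real.rpow_nonneg hM2 _) (by positivity)
      _ ≤ 8 ^ (θ / 2) * (SS + M ^ θ) := by
          apply mul_le_mul_of_nonneg_left _ (by positivity)
          rw [hMp]
          linarith [hS2p]
  -- conclusion
  have h8 : (1:ℝ) ≤ 8 ^ (θ / 2) := Real.one_le_rpow (by norm_num) hθ2
  have hMθ : (0:ℝ) ≤ M ^ θ := Real.rpow_nonneg (by linarith) _
  calc (∑ n ∈ s, |(k n : ℝ) - k' n| * wR n ^ (θ / 2))
      ≤ 2 * C + SS := hmain
    _ ≤ 2 * (8 ^ (θ / 2) * (SS + M ^ θ)) + SS := by linarith [hCb]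
    _ ≤ 3 * 8 ^ (θ / 2) * (SS + M ^ θ) := by nlinarith [h8, hSS_nonneg, hMθ]
end

section
/- For every θ ∈ (0,1) there exists a constant C > 0, depending only on θ, such that for every real B ≥ 2 and every finitely supported function l : ℤ → ℤ with ∑_{n∈ℤ} |l_n|·w(n)^{θ/2} ≤ B, one has ∏_{n∈ℤ} (1 + l_n²·w(n)⁴) ≤ exp( C·B^{3/(3+θ)} ). -/
open scoped BigOperators

-- pointwise bound
lemma aux_point (θ : ℝ) (hθ0 : 0 < θ) (hθ1 : θ < 1) (L w : ℝ) (hL : 1 ≤ L) (hw : 1 ≤ w) :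
    1 + L ^ 2 * w ^ 4 ≤
      Real.exp ((Real.log 2 + (2 + 8/θ) * (3 + θ)) * (L * w ^ (θ/2)) ^ (1/(3+θ))) := by
  have h3 : (0:ℝ) < 3 + θ := by linarith
  set ε : ℝ := 1/(3+θ) with hεdef
  have hε0 : 0 < ε := by positivity
  have hL0 : 0 < L := by linarith
  have hw0 : 0 < w := by linarith
  have hwp : 1 ≤ w ^ (θ/2) := Real.one_le_rpow hw (by positivity)
  set a : ℝ := L * w ^ (θ/2) with hadef
  have ha1 : 1 ≤ a := one_le_mul_of_one_le_of_one_le hL hwp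
  have ha0 : 0 < a := by linarith
  set p : ℝ := 2 + 8/θ with hpdef
  have hp0 : 0 < p := by positivity
  -- step 1 : 1 + L^2 w^4 ≤ 2 * a ^ p
  have hstep1 : 1 + L ^ 2 * w ^ 4 ≤ 2 * a ^ p := by
    have h1 : (1:ℝ) ≤ L ^ 2 * w ^ 4 := one_le_mul_of_one_le_of_one_le (one_le_pow₀ hL) (one_le_pow₀ hw)
    have h2 : L ^ 2 * w ^ 4 ≤ a ^ p := by
      have hθp : θ/2 * p = θ + 4 := by rw [hpdef]; field_simp; ring
      have hap : a ^ p = L ^ p * w ^ (θ + 4) := by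
        rw [hadef, Real.mul_rpow (le_of_lt hL0) (by positivity), ← Real.rpow_mul (le_of_lt hw0), hθp]
      have hL2 : L ^ 2 ≤ L ^ p := by
        have : L ^ (2:ℝ) ≤ L ^ p := Real.rpow_le_rpow_of_exponent_le hL
          (by rw [hpdef]; exact le_add_of_nonneg_right (by positivity))
        calc L ^ 2 = L ^ (2:ℝ) := by rw [← Real.rpow_natCast L 2]; norm_num
          _ ≤ L ^ p := this
      have hw4 : w ^ 4 ≤ w ^ (θ + 4) := by
        have : w ^ (4:ℝ) ≤ w ^ (θ + 4) := Real.rpow_le_rpow_of_exponent_le hw (by linarith)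
        calc w ^ 4 = w ^ (4:ℝ) := by rw [← Real.rpow_natCast w 4]; norm_num
          _ ≤ w ^ (θ + 4) := this
      rw [hap]
      exact mul_le_mul hL2 hw4 (by positivity) (by positivity)
    linarith
  -- step 2 : 2 * a ^ p ≤ exp(K * a ^ ε)
  have hloga : Real.log a ≤ a ^ ε / ε := by
    have := Real.log_le_sub_one_of_pos (show 0 < a ^ ε by positivity)
    rw [Real.log_rpow ha0] at this
    rw [le_div_iff₀ hε0]
    nlinarith
  have haε1 : 1 ≤ a ^ ε := Real.one_le_rpow ha1 (le_of_lt hε0)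
  have hstep2 : 2 * a ^ p ≤ Real.exp ((Real.log 2 + p / ε) * a ^ ε) := by
    have h2ap : 0 < 2 * a ^ p := by positivity
    rw [← Real.exp_log h2ap, Real.exp_le_exp, Real.log_mul (by norm_num) (by positivity),
      Real.log_rpow ha0]
    have hlog2 : Real.log 2 ≤ Real.log 2 * a ^ ε :=
      le_mul_of_one_le_right (Real.log_nonneg (by norm_num)) haε1
    have : p * Real.log a ≤ p / ε * a ^ ε := by
      calc p * Real.log a ≤ p * (a ^ ε / ε) := mul_le_mul_of_nonneg_left hloga (le_of_lt hp0)
        _ = p / ε * a ^ ε := by ring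
    nlinarith [hlog2, this]
  have hKε : p / ε = p * (3 + θ) := by
    rw [hεdef]; field_simp
  calc 1 + L ^ 2 * w ^ 4 ≤ 2 * a ^ p := hstep1
    _ ≤ Real.exp ((Real.log 2 + p / ε) * a ^ ε) := hstep2
    _ = Real.exp ((Real.log 2 + p * (3 + θ)) * a ^ ε) := by rw [hKε]

lemma aux_count (θ : ℝ) (hθ0 : 0 < θ) (hθ1 : θ < 1) (B : ℝ) (hB : 2 ≤ B)
    (l : ℤ →₀ ℤ)
    (hsum : (∑ n ∈ l.support, |(l n : ℝ)| * wR n ^ (θ / 2)) ≤ B) :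
    ∑ n ∈ l.support, (|(l n : ℝ)| * wR n ^ (θ / 2)) ^ (1/(3+θ))
      ≤ 6 * B ^ (3/(3+θ)) := by
  have h3 : (0:ℝ) < 3 + θ := by linarith
  have h2θ : (0:ℝ) < 2 + θ := by linarith
  have hB0 : (0:ℝ) < B := by linarith
  have hB1 : (1:ℝ) ≤ B := by linarith
  have hθne : θ ≠ 0 := ne_of_gt hθ0
  have h2ne : (2:ℝ) + θ ≠ 0 := ne_of_gt h2θ
  have h3ne : (3:ℝ) + θ ≠ 0 := ne_of_gt h3
  set ε : ℝ := 1/(3+θ) with hεdef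
  set γ : ℝ := θ/(2+θ) with hγdef
  set s : ℝ := 3/(3+θ) with hsdef
  have hε0 : 0 < ε := by positivity
  have hε1 : ε ≤ 1 := by
    rw [hεdef, div_le_one h3]; linarith
  set M : ℝ := B ^ γ with hMdef
  have hM1 : 1 ≤ M := Real.one_le_rpow hB1 (by positivity)
  have hM0 : 0 < M := by linarith
  set X : ℝ := M ^ (2/θ) with hXdef
  have hX1 : 1 ≤ X := Real.one_le_rpow hM1 (by positivity)
  set a : ℤ → ℝ := fun n => |(l n : ℝ)| * wR n ^ (θ/2) with hadef
  have ha0 : ∀ n, 0 ≤ a n := by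
    intro n
    have : (0:ℝ) ≤ wR n := le_trans zero_le_one (le_max_left _ _)
    positivity
  have hw1 : ∀ n : ℤ, 1 ≤ wR n := fun n => le_max_left _ _
  have hl1 : ∀ n ∈ l.support, 1 ≤ |(l n : ℝ)| := by
    intro n hn
    have h := Finsupp.mem_support_iff.mp hn
    have : (1:ℤ) ≤ |l n| := Int.one_le_abs (by omega)
    exact_mod_cast this
  have hwa : ∀ n ∈ l.support, wR n ^ (θ/2) ≤ a n := by
    intro n hn
    have hwp : (0:ℝ) ≤ wR n ^ (θ/2) := by
      have : (0:ℝ) ≤ wR n := le_trans zero_le_one (hw1 n)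
      positivity
    exact le_mul_of_one_le_left hwp (hl1 n hn)
  set P : Finset ℤ := l.support.filter (fun n => a n < M) with hPdef
  set Q : Finset ℤ := l.support.filter (fun n => ¬ a n < M) with hQdef
  have hsplit : ∑ n ∈ l.support, a n ^ ε
      = (∑ n ∈ P, a n ^ ε) + (∑ n ∈ Q, a n ^ ε) :=
    (Finset.sum_filter_add_sum_filter_not l.support (fun n => a n < M) _).symm
  -- Q part
  have hQbound : ∑ n ∈ Q, a n ^ ε ≤ B ^ s := by
    have h1 : ∀ n ∈ Q, a n ^ ε ≤ a n * M ^ (ε - 1) := by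
      intro n hn
      have hMa : M ≤ a n := not_lt.mp (Finset.mem_filter.mp hn).2
      have han0 : 0 < a n := lt_of_lt_of_le hM0 hMa
      have key : a n ^ ε = a n * a n ^ (ε - 1) := by
        have he : ε = 1 + (ε - 1) := by ring
        rw [he, Real.rpow_add han0, Real.rpow_one]
        ring_nf
      rw [key]
      exact mul_le_mul_of_nonneg_left
        (Real.rpow_le_rpow_of_nonpos hM0 hMa (by linarith)) han0.le
    have h2 : (∑ n ∈ Q, a n) ≤ B := by
      refine le_trans (Finset.sum_le_sum_of_subset_of_nonneg
        (Finset.filter_subset _ _) (fun n _ _ => ha0 n)) hsum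
    have h3' : ∑ n ∈ Q, a n ^ ε ≤ (∑ n ∈ Q, a n) * M ^ (ε - 1) := by
      rw [Finset.sum_mul]
      exact Finset.sum_le_sum h1
    have h4 : (∑ n ∈ Q, a n) * M ^ (ε - 1) ≤ B * M ^ (ε - 1) :=
      mul_le_mul_of_nonneg_right h2 (by positivity)
    have h5 : B * M ^ (ε - 1) = B ^ s := by
      rw [hMdef, ← Real.rpow_mul hB0.le]
      have hse : s = 1 + γ * (ε - 1) := by
        rw [hsdef, hγdef, hεdef]; field_simp; ring
      rw [hse, Real.rpow_add hB0, Real.rpow_one]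
    linarith
  -- P part
  have hPsub : P ⊆ Finset.Icc (-(⌈X⌉)) ⌈X⌉ := by
    intro n hn
    obtain ⟨hmem, hlt⟩ := Finset.mem_filter.mp hn
    have hwM : wR n ^ (θ/2) ≤ M := le_trans (hwa n hmem) hlt.le
    have hwX : wR n ≤ X := by
      have h0w : (0:ℝ) ≤ wR n := le_trans zero_le_one (hw1 n)
      have h := Real.rpow_le_rpow (by positivity) hwM (by positivity : (0:ℝ) ≤ 2/θ)
      rw [← Real.rpow_mul h0w] at h
      rw [show θ/2*(2/θ) = (1:ℝ) by field_simp] at h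
      rwa [Real.rpow_one] at h
    have habs : |(n:ℝ)| ≤ X := le_trans (le_max_right _ _) hwX
    have hceil : |n| ≤ ⌈X⌉ := by
      have : ((|n| : ℤ) : ℝ) ≤ ((⌈X⌉ : ℤ) : ℝ) := by
        push_cast
        exact le_trans habs (Int.le_ceil X)
      exact_mod_cast this
    rw [Finset.mem_Icc]
    constructor
    · linarith [neg_abs_le n, (abs_le.mp hceil).1]
    · linarith [le_abs_self n]
  have hceilX : (⌈X⌉ : ℝ) ≤ X + 1 := le_of_lt (Int.ceil_lt_add_one X)
  have hcard : (P.card : ℝ) ≤ 5 * X := by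
    have h1 : P.card ≤ (Finset.Icc (-(⌈X⌉)) ⌈X⌉).card := Finset.card_le_card hPsub
    have hc1 : (0:ℤ) < ⌈X⌉ := Int.ceil_pos.mpr (by linarith)
    have h2 : ((Finset.Icc (-(⌈X⌉)) ⌈X⌉).card : ℝ) = 2 * (⌈X⌉ : ℝ) + 1 := by
      rw [Int.card_Icc]
      have he : ⌈X⌉ + 1 - -⌈X⌉ = 2 * ⌈X⌉ + 1 := by ring
      rw [he]
      have h0 : (0:ℤ) ≤ 2 * ⌈X⌉ + 1 := by omega
      calc (((2 * ⌈X⌉ + 1).toNat : ℕ) : ℝ) = (((2 * ⌈X⌉ + 1).toNat : ℤ) : ℝ) := by push_cast; ring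
        _ = ((2 * ⌈X⌉ + 1 : ℤ) : ℝ) := by rw [Int.toNat_of_nonneg h0]
        _ = 2 * (⌈X⌉ : ℝ) + 1 := by push_cast; ring
    have h3' : (P.card : ℝ) ≤ 2 * (⌈X⌉ : ℝ) + 1 := by
      rw [← h2]; exact_mod_cast h1
    linarith
  have hPbound : ∑ n ∈ P, a n ^ ε ≤ 5 * B ^ s := by
    have h1 : ∑ n ∈ P, a n ^ ε ≤ ∑ n ∈ P, M ^ ε := by
      refine Finset.sum_le_sum (fun n hn => ?_)
      exact Real.rpow_le_rpow (ha0 n) (le_of_lt (Finset.mem_filter.mp hn).2) hε0.le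
    have h2 : ∑ n ∈ P, M ^ ε = (P.card : ℝ) * M ^ ε := by
      rw [Finset.sum_const, nsmul_eq_mul]
    have h3' : (P.card : ℝ) * M ^ ε ≤ 5 * X * M ^ ε :=
      mul_le_mul_of_nonneg_right hcard (by positivity)
    have h4 : 5 * X * M ^ ε = 5 * B ^ s := by
      rw [hXdef, mul_assoc, ← Real.rpow_add hM0, hMdef, ← Real.rpow_mul hB0.le]
      rw [show γ * (2/θ + ε) = s from by rw [hsdef, hγdef, hεdef]; field_simp; ring]
    linarith
  calc ∑ n ∈ l.support, a n ^ ε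
      = (∑ n ∈ P, a n ^ ε) + (∑ n ∈ Q, a n ^ ε) := hsplit
    _ ≤ 5 * B ^ s + B ^ s := add_le_add hPbound hQbound
    _ = 6 * B ^ s := by ring

theorem stmt8 (θ : ℝ) (hθ : θ ∈ Set.Ioo (0:ℝ) 1) :
    ∃ C > (0:ℝ), ∀ B : ℝ, 2 ≤ B → ∀ l : ℤ →₀ ℤ,
      (∑ n ∈ l.support, |(l n : ℝ)| * wR n ^ (θ / 2)) ≤ B →
      ∏ n ∈ l.support, (1 + (l n : ℝ) ^ 2 * wR n ^ 4)
        ≤ Real.exp (C * B ^ (3 / (3 + θ))) := by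
  obtain ⟨hθ0, hθ1⟩ := hθ
  set K : ℝ := Real.log 2 + (2 + 8/θ) * (3 + θ) with hKdef
  have hK0 : 0 < K := by
    have h1 : 0 < Real.log 2 := Real.log_pos (by norm_num)
    have h2 : (0:ℝ) < (2 + 8/θ) * (3 + θ) := by positivity
    rw [hKdef]
    linarith
  refine ⟨6 * K, by linarith, ?_⟩
  intro B hB l hsum
  have hw1 : ∀ n : ℤ, 1 ≤ wR n := fun n => le_max_left _ _
  have hw0 : ∀ n : ℤ, (0:ℝ) ≤ wR n := fun n => le_trans zero_le_one (hw1 n)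
  have hl1 : ∀ n ∈ l.support, 1 ≤ |(l n : ℝ)| := by
    intro n hn
    have h := Finsupp.mem_support_iff.mp hn
    have : (1:ℤ) ≤ |l n| := Int.one_le_abs (by omega)
    exact_mod_cast this
  have hpt : ∀ n ∈ l.support, 1 + (l n : ℝ) ^ 2 * wR n ^ 4
      ≤ Real.exp (K * (|(l n : ℝ)| * wR n ^ (θ/2)) ^ (1/(3+θ))) := by
    intro n hn
    have := aux_point θ hθ0 hθ1 |(l n : ℝ)| (wR n) (hl1 n hn) (hw1 n)
    rwa [sq_abs] at this
  have hprod : ∏ n ∈ l.support, (1 + (l n : ℝ) ^ 2 * wR n ^ 4)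
      ≤ ∏ n ∈ l.support, Real.exp (K * (|(l n : ℝ)| * wR n ^ (θ/2)) ^ (1/(3+θ))) := by
    refine Finset.prod_le_prod (fun n _ => ?_) hpt
    have := hw0 n
    positivity
  have hcount := aux_count θ hθ0 hθ1 B hB l hsum
  calc ∏ n ∈ l.support, (1 + (l n : ℝ) ^ 2 * wR n ^ 4)
      ≤ ∏ n ∈ l.support, Real.exp (K * (|(l n : ℝ)| * wR n ^ (θ/2)) ^ (1/(3+θ))) := hprod
    _ = Real.exp (∑ n ∈ l.support, K * (|(l n : ℝ)| * wR n ^ (θ/2)) ^ (1/(3+θ))) :=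
        (Real.exp_sum _ _).symm
    _ = Real.exp (K * ∑ n ∈ l.support, (|(l n : ℝ)| * wR n ^ (θ/2)) ^ (1/(3+θ))) := by
        rw [Finset.mul_sum]
    _ ≤ Real.exp (K * (6 * B ^ (3/(3+θ)))) := by
        rw [Real.exp_le_exp]
        exact mul_le_mul_of_nonneg_left hcount hK0.le
    _ = Real.exp (6 * K * B ^ (3 / (3 + θ))) := by ring_nf
end

section
/- For every θ ∈ (0,1) there exist constants C > 0 and δ₀ ∈ (0,1), depending only on θ, with the following property. Let γ > 0 and let Ṽ : ℤ → ℝ be such that for every nonzero finitely supported l : ℤ → ℤ one has |∑_{n∈ℤ} l_n·(n² + Ṽ_n)| ≥ γ·∏_{n∈ℤ} (1 + l_n²·w(n)⁴)^{−1}. Then for every δ ∈ (0,δ₀) and every nonzero finitely supported l : ℤ → ℤ one has |∑_{n∈ℤ} l_n·(n² + Ṽ_n)| ≥ γ·exp( −C·δ^{−5/θ} − δ·∑_{n∈ℤ} |l_n|·w(n)^{θ/2} ). -/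
open scoped BigOperators

private lemma log_le_self_sub_one {t : ℝ} (ht : 0 < t) : Real.log t ≤ t - 1 :=
  Real.log_le_sub_one_of_pos ht

set_option maxHeartbeats 1000000 in
private lemma key_ineq (θ δ x w : ℝ) (hθ0 : 0 < θ) (hθ1 : θ < 1)
    (hδ0 : 0 < δ) (hδ1 : δ < 1) (hx : 1 ≤ x) (hw : 1 ≤ w) :
    1 + x ^ 2 * w ^ 4 ≤
      Real.exp (δ * (x * w ^ (θ / 2)) +
        (if w ≤ (30 / (θ * δ)) ^ (4 / θ) then
          2 * Real.log (4 / δ) + 4 * Real.log (1 + (30 / (θ * δ)) ^ (4 / θ)) else 0)) := by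
  have hx0 : (0:ℝ) < x := by linarith
  have hw0 : (0:ℝ) < w := by linarith
  have hpos : (0:ℝ) < 1 + x ^ 2 * w ^ 4 := by positivity
  rw [← Real.exp_log hpos]
  apply Real.exp_le_exp.mpr
  -- First bound the log by 2 log(1+x) + 4 log(1+w)
  have hlog1 : Real.log (1 + x ^ 2 * w ^ 4) ≤
      2 * Real.log (1 + x) + 4 * Real.log (1 + w) := by
    have hle : 1 + x ^ 2 * w ^ 4 ≤ (1 + x) ^ 2 * (1 + w) ^ 4 := by
      have e1 : 1 + x ^ 2 ≤ (1 + x) ^ 2 := by nlinarith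
      have e2 : 1 + w ^ 4 ≤ (1 + w) ^ 4 := by
        have : (1 + w) ^ 4 = 1 + 4*w + 6*w^2 + 4*w^3 + w^4 := by ring
        nlinarith [hw0.le, sq_nonneg w, mul_nonneg (mul_nonneg hw0.le hw0.le) hw0.le]
      have e3 : 1 + x ^ 2 * w ^ 4 ≤ (1 + x ^ 2) * (1 + w ^ 4) := by
        nlinarith [sq_nonneg x, pow_nonneg hw0.le 4]
      have e4 : (1 + x ^ 2) * (1 + w ^ 4) ≤ (1 + x) ^ 2 * (1 + w) ^ 4 := by
        apply mul_le_mul e1 e2 (by positivity) (by positivity)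
      linarith
    calc Real.log (1 + x ^ 2 * w ^ 4) ≤ Real.log ((1 + x) ^ 2 * (1 + w) ^ 4) :=
          Real.log_le_log hpos hle
      _ = 2 * Real.log (1 + x) + 4 * Real.log (1 + w) := by
          rw [Real.log_mul (by positivity) (by positivity), Real.log_pow, Real.log_pow]
          push_cast; ring
  set N : ℝ := (30 / (θ * δ)) ^ (4 / θ) with hN
  clear_value N
  have hθδ : 0 < θ * δ := mul_pos hθ0 hδ0
  have hbase : (1:ℝ) ≤ 30 / (θ * δ) := by
    rw [le_div_iff₀ hθδ]; nlinarith
  have hN1 : (1:ℝ) ≤ N := hN ▸ Real.one_le_rpow hbase (by positivity)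
  have hwhalf : (1:ℝ) ≤ w ^ (θ / 2) := Real.one_le_rpow hw (by positivity)
  by_cases hcase : w ≤ N
  · rw [if_pos hcase]
    have h2 : Real.log (1 + x) ≤ δ / 4 * x + Real.log (4 / δ) := by
      have heq : (1:ℝ) + x = (4 / δ) * (δ / 4 * (1 + x)) := by
        field_simp
      rw [heq, Real.log_mul (by positivity) (by positivity)]
      have h := log_le_self_sub_one (t := δ / 4 * (1 + x)) (by positivity)
      nlinarith
    have h3 : Real.log (1 + w) ≤ Real.log (1 + N) :=
      Real.log_le_log (by positivity) (by linarith)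
    have h4 : δ * x ≤ δ * (x * w ^ (θ / 2)) := by
      have := mul_le_mul_of_nonneg_left hwhalf (by positivity : (0:ℝ) ≤ δ * x)
      nlinarith
    nlinarith
  · rw [if_neg hcase, add_zero]
    push_neg at hcase
    set u : ℝ := w ^ (θ / 4) with hu
    clear_value u
    have hu0 : 0 < u := hu ▸ Real.rpow_pos_of_pos hw0 _
    have h5 : 30 / (θ * δ) ≤ u := by
      have h := Real.rpow_le_rpow (by positivity : (0:ℝ) ≤ N) hcase.le
        (by positivity : (0:ℝ) ≤ θ / 4)
      have hNe : N ^ (θ / 4) = 30 / (θ * δ) := by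
        rw [hN, ← Real.rpow_mul (by positivity)]
        rw [show (4 / θ) * (θ / 4) = 1 from by field_simp]
        exact Real.rpow_one _
      rwa [hNe, ← hu] at h
    have hu1 : (1:ℝ) ≤ u := le_trans hbase h5
    have h6 : Real.log (1 + x) ≤ x := by
      have := log_le_self_sub_one (t := 1 + x) (by positivity); linarith
    have h7 : Real.log w ≤ 4 / θ * u := by
      have h := log_le_self_sub_one (t := u) hu0
      rw [hu, Real.log_rpow hw0] at h
      have h' : θ / 4 * Real.log w ≤ u := by
        have hlw : Real.log (w ^ (θ/4)) = θ / 4 * Real.log w := Real.log_rpow hw0 _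
        have := log_le_self_sub_one (t := w ^ (θ/4)) (by positivity)
        rw [hlw] at this; rw [hu]; linarith
      calc Real.log w = 4 / θ * (θ / 4 * Real.log w) := by field_simp
        _ ≤ 4 / θ * u := by
            apply mul_le_mul_of_nonneg_left h' (by positivity)
    have h8 : Real.log (1 + w) ≤ 1 + Real.log w := by
      have hle : (1:ℝ) + w ≤ 2 * w := by linarith
      have := Real.log_le_log (by positivity : (0:ℝ) < 1 + w) hle
      rw [Real.log_mul (by norm_num) (by positivity)] at this
      have hl2 : Real.log 2 ≤ 1 := by
        have := log_le_self_sub_one (t := 2) (by norm_num); linarith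
      linarith
    have h9 : w ^ (θ / 2) = u * u := by
      rw [hu, ← Real.rpow_add hw0]
      congr 1
      ring
    have h30 : 30 ≤ θ * δ * u := by
      rw [div_le_iff₀ hθδ] at h5; linarith [h5]
    -- goal : log(1+x^2 w^4) ≤ δ * (x * w^(θ/2))
    have hgoal : 2 * x + 4 + 4 * (1 + 4 / θ * u) ≤ δ * (x * (u * u)) := by
      have hL : θ * (2 * x + 4 + 4 * (1 + 4 / θ * u)) = 2 * θ * x + 8 * θ + 16 * u := by
        field_simp; ring
      have p1 : x ≤ x * u := le_mul_of_one_le_right (by linarith) hu1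
      have p2 : u ≤ x * u := le_mul_of_one_le_left hu0.le hx
      have p3 : (1:ℝ) ≤ x * u := le_trans hu1 p2
      have p4 : 30 * (x * u) ≤ (θ * δ * u) * (x * u) := by
        apply mul_le_mul_of_nonneg_right h30 (by positivity)
      have hscaled : 2 * θ * x + 8 * θ + 16 * u ≤ (θ * δ * u) * (x * u) := by
        have q1 : θ * x ≤ x := by nlinarith [mul_le_mul_of_nonneg_right hθ1.le hx0.le]
        nlinarith [p1, p2, p3, p4, q1, hθ1, hθ0.le]
      have hfin : θ * (2 * x + 4 + 4 * (1 + 4 / θ * u)) ≤ θ * (δ * (x * (u * u))) := by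
        rw [hL]
        calc 2 * θ * x + 8 * θ + 16 * u ≤ (θ * δ * u) * (x * u) := hscaled
          _ = θ * (δ * (x * (u * u))) := by ring
      exact le_of_mul_le_mul_left hfin hθ0
    have h10 : 4 * Real.log (1 + w) ≤ 4 * (1 + 4 / θ * u) := by nlinarith
    rw [h9]
    linarith [hlog1, h6, h10, hgoal]

set_option maxHeartbeats 1000000 in
private lemma gsum (θ δ : ℝ) (hθ0 : 0 < θ) (hθ1 : θ < 1) (hδ0 : 0 < δ) (hδ1 : δ < 1)
    (s : Finset ℤ) :
    ∑ n ∈ s, (if wR n ≤ (30 / (θ * δ)) ^ (4 / θ) then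
        2 * Real.log (4 / δ) + 4 * Real.log (1 + (30 / (θ * δ)) ^ (4 / θ)) else 0)
      ≤ (2460 / θ ^ 2 * (30 / θ) ^ (4 / θ)) * δ ^ (-(5 / θ)) := by
  have hθδ : 0 < θ * δ := mul_pos hθ0 hδ0
  have hbase : (1:ℝ) ≤ 30 / (θ * δ) := by
    rw [le_div_iff₀ hθδ]; nlinarith
  set N : ℝ := (30 / (θ * δ)) ^ (4 / θ) with hN
  have hN1 : (1:ℝ) ≤ N := hN ▸ Real.one_le_rpow hbase (by positivity)
  have hN0 : (0:ℝ) < N := by linarith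
  set B : ℝ := 2 * Real.log (4 / δ) + 4 * Real.log (1 + N) with hB
  have hB0 : (0:ℝ) ≤ B := by
    have l1 : (0:ℝ) ≤ Real.log (4 / δ) := Real.log_nonneg (by rw [le_div_iff₀ hδ0]; linarith)
    have l2 : (0:ℝ) ≤ Real.log (1 + N) := Real.log_nonneg (by linarith)
    rw [hB]; linarith
  set M : ℤ := ⌈N⌉ with hM
  have hMN : (M:ℝ) < N + 1 := Int.ceil_lt_add_one N
  have hNM : N ≤ (M:ℝ) := Int.le_ceil N
  have hM1 : (1:ℝ) ≤ (M:ℝ) := le_trans hN1 hNM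
  have hMint : (1:ℤ) ≤ M := by exact_mod_cast hM1
  classical
  have hsum : ∑ n ∈ s, (if wR n ≤ N then B else 0)
      = ((s.filter fun n => wR n ≤ N).card : ℝ) * B := by
    rw [← Finset.sum_filter, Finset.sum_const, nsmul_eq_mul]
  have hsub : (s.filter fun n => wR n ≤ N) ⊆ Finset.Icc (-M) M := by
    intro n hn
    rw [Finset.mem_filter] at hn
    have h1 : |(n:ℝ)| ≤ N := le_trans (le_max_right _ _) hn.2
    have h2 : ((|n| : ℤ) : ℝ) ≤ (M:ℝ) := by push_cast; exact le_trans h1 hNM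
    have h3 : |n| ≤ M := by exact_mod_cast h2
    have h4 := abs_le.mp h3
    exact Finset.mem_Icc.mpr ⟨h4.1, h4.2⟩
  have hcard : (((s.filter fun n => wR n ≤ N).card : ℕ) : ℝ) ≤ 2 * (M:ℝ) + 1 := by
    have hc1 := Finset.card_le_card hsub
    have hc2 : (Finset.Icc (-M) M).card = (2 * M + 1).toNat := by
      rw [Int.card_Icc]; congr 1; ring
    have hc3 : (((Finset.Icc (-M) M).card : ℕ) : ℝ) = 2 * (M:ℝ) + 1 := by
      rw [hc2]
      have h : ((2 * M + 1).toNat : ℤ) = 2 * M + 1 := Int.toNat_of_nonneg (by linarith)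
      exact_mod_cast congrArg (fun z : ℤ => (z : ℝ)) h
    calc (((s.filter fun n => wR n ≤ N).card : ℕ) : ℝ)
        ≤ (((Finset.Icc (-M) M).card : ℕ) : ℝ) := by exact_mod_cast hc1
      _ = 2 * (M:ℝ) + 1 := hc3
  have hBbound : B ≤ 492 / (θ ^ 2 * δ) := by
    have a1 : Real.log (4 / δ) ≤ 4 / δ := by
      have := log_le_self_sub_one (t := 4 / δ) (by positivity); linarith
    have a3 : Real.log N = 4 / θ * Real.log (30 / (θ * δ)) := by
      rw [hN]; exact Real.log_rpow (by positivity) _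
    have a4 : Real.log (30 / (θ * δ)) ≤ 30 / (θ * δ) := by
      have := log_le_self_sub_one (t := 30 / (θ * δ)) (by positivity); linarith
    have a2 : Real.log (1 + N) ≤ 1 + Real.log N := by
      have hle : (1:ℝ) + N ≤ 2 * N := by linarith
      have hlog := Real.log_le_log (by positivity : (0:ℝ) < 1 + N) hle
      rw [Real.log_mul (by norm_num) (by positivity)] at hlog
      have hl2 : Real.log 2 ≤ 1 := by
        have := log_le_self_sub_one (t := 2) (by norm_num); linarith
      linarith
    have a5 : Real.log N ≤ 120 / (θ ^ 2 * δ) := by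
      rw [a3]
      have h30 : 4 / θ * (30 / (θ * δ)) = 120 / (θ ^ 2 * δ) := by
        field_simp; ring
      calc 4 / θ * Real.log (30 / (θ * δ)) ≤ 4 / θ * (30 / (θ * δ)) := by
            apply mul_le_mul_of_nonneg_left a4 (by positivity)
        _ = 120 / (θ ^ 2 * δ) := h30
    have b1 : 8 / δ ≤ 8 / (θ ^ 2 * δ) := by
      rw [div_le_div_iff₀ hδ0 (by positivity)]; nlinarith
    have b2 : (8:ℝ) ≤ 8 / (θ ^ 2 * δ) := by
      rw [le_div_iff₀ (by positivity)]; nlinarith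
    rw [hB]
    have hhalf : (4:ℝ) ≤ 4 / (θ ^ 2 * δ) := by
      rw [le_div_iff₀ (by positivity)]; nlinarith
    have e1 : (8:ℝ) / δ = 2 * (4 / δ) := by ring
    have e2 : (480:ℝ) / (θ ^ 2 * δ) = 4 * (120 / (θ ^ 2 * δ)) := by ring
    have e3 : (492:ℝ) / (θ ^ 2 * δ)
        = 8 / (θ ^ 2 * δ) + 4 / (θ ^ 2 * δ) + 480 / (θ ^ 2 * δ) := by ring
    linarith [a1, a2, a5, b1, hhalf, e1, e2, e3]
  have hNfac : N = (30 / θ) ^ (4 / θ) * δ ^ (-(4 / θ)) := by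
    rw [hN, show 30 / (θ * δ) = (30 / θ) * δ⁻¹ by field_simp,
      Real.mul_rpow (by positivity) (by positivity), Real.inv_rpow hδ0.le,
      ← Real.rpow_neg hδ0.le]
  have hexp : δ ^ (-(4 / θ)) * δ⁻¹ = δ ^ (-(4 / θ) - 1) := by
    rw [show δ⁻¹ = δ ^ (-1:ℝ) from (Real.rpow_neg_one δ).symm, ← Real.rpow_add hδ0]
    congr 1
  have hmono : δ ^ (-(4 / θ) - 1) ≤ δ ^ (-(5 / θ)) := by
    apply Real.rpow_le_rpow_of_exponent_ge hδ0 hδ1.le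
    have h1θ : (1:ℝ) ≤ 1 / θ := by rw [le_div_iff₀ hθ0]; linarith
    have : (5:ℝ) / θ = 4 / θ + 1 / θ := by ring
    linarith
  calc ∑ n ∈ s, (if wR n ≤ N then B else 0)
      = ((s.filter fun n => wR n ≤ N).card : ℝ) * B := hsum
    _ ≤ (2 * (M:ℝ) + 1) * B := mul_le_mul_of_nonneg_right hcard hB0
    _ ≤ (5 * N) * B := by
        apply mul_le_mul_of_nonneg_right _ hB0
        linarith
    _ ≤ (5 * N) * (492 / (θ ^ 2 * δ)) := by
        apply mul_le_mul_of_nonneg_left hBbound (by positivity)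
    _ = (2460 / θ ^ 2 * (30 / θ) ^ (4 / θ)) * (δ ^ (-(4 / θ)) * δ⁻¹) := by
        rw [hNfac]; ring
    _ = (2460 / θ ^ 2 * (30 / θ) ^ (4 / θ)) * δ ^ (-(4 / θ) - 1) := by rw [hexp]
    _ ≤ (2460 / θ ^ 2 * (30 / θ) ^ (4 / θ)) * δ ^ (-(5 / θ)) := by
        apply mul_le_mul_of_nonneg_left hmono (by positivity)

theorem stmt14 (θ : ℝ) (hθ : θ ∈ Set.Ioo (0:ℝ) 1) :
    ∃ C > (0:ℝ), ∃ δ₀ ∈ Set.Ioo (0:ℝ) 1, ∀ γ : ℝ, 0 < γ → ∀ V : ℤ → ℝ,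
      (∀ l : ℤ →₀ ℤ, l ≠ 0 →
        γ * (∏ n ∈ l.support, (1 + (l n : ℝ) ^ 2 * wR n ^ 4))⁻¹
          ≤ |∑ n ∈ l.support, (l n : ℝ) * ((n : ℝ) ^ 2 + V n)|) →
      ∀ δ ∈ Set.Ioo (0:ℝ) δ₀, ∀ l : ℤ →₀ ℤ, l ≠ 0 →
        γ * Real.exp (-(C * δ ^ (-(5 / θ)))
            - δ * ∑ n ∈ l.support, |(l n : ℝ)| * wR n ^ (θ / 2))
          ≤ |∑ n ∈ l.support, (l n : ℝ) * ((n : ℝ) ^ 2 + V n)| := by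
  obtain ⟨hθ0, hθ1⟩ := hθ
  refine ⟨2460 / θ ^ 2 * (30 / θ) ^ (4 / θ), by positivity, (1/2 : ℝ), by norm_num, ?_⟩
  intro γ hγ V hyp δ hδ l hl
  obtain ⟨hδ0, hδhalf⟩ := hδ
  have hδ1 : δ < 1 := by linarith
  refine le_trans ?_ (hyp l hl)
  apply mul_le_mul_of_nonneg_left _ hγ.le
  set S : ℝ := ∑ n ∈ l.support, |(l n : ℝ)| * wR n ^ (θ / 2) with hS
  set P : ℝ := ∏ n ∈ l.support, (1 + (l n : ℝ) ^ 2 * wR n ^ 4) with hP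
  have hP0 : 0 < P := by
    rw [hP]
    apply Finset.prod_pos
    intro n _
    have h1 : (1:ℝ) ≤ wR n := le_max_left _ _
    positivity
  have hPle : P ≤ Real.exp (2460 / θ ^ 2 * (30 / θ) ^ (4 / θ) * δ ^ (-(5 / θ)) + δ * S) := by
    classical
    have hterm : ∀ n ∈ l.support,
        1 + (l n : ℝ) ^ 2 * wR n ^ 4 ≤
        Real.exp (δ * (|(l n : ℝ)| * wR n ^ (θ / 2)) +
          (if wR n ≤ (30 / (θ * δ)) ^ (4 / θ) then
            2 * Real.log (4 / δ) + 4 * Real.log (1 + (30 / (θ * δ)) ^ (4 / θ)) else 0)) := by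
      intro n hn
      have hln : l n ≠ 0 := Finsupp.mem_support_iff.mp hn
      have hx1 : (1:ℝ) ≤ |(l n : ℝ)| := by
        have h := Int.one_le_abs hln
        exact_mod_cast h
      have h := key_ineq θ δ |(l n : ℝ)| (wR n) hθ0 hθ1 hδ0 hδ1 hx1 (le_max_left _ _)
      rwa [sq_abs] at h
    calc P ≤ ∏ n ∈ l.support,
          Real.exp (δ * (|(l n : ℝ)| * wR n ^ (θ / 2)) +
            (if wR n ≤ (30 / (θ * δ)) ^ (4 / θ) then
              2 * Real.log (4 / δ) + 4 * Real.log (1 + (30 / (θ * δ)) ^ (4 / θ)) else 0)) := by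
          rw [hP]
          apply Finset.prod_le_prod
          · intro n _
            have h1 : (1:ℝ) ≤ wR n := le_max_left _ _
            positivity
          · exact hterm
      _ = Real.exp (∑ n ∈ l.support,
            (δ * (|(l n : ℝ)| * wR n ^ (θ / 2)) +
              (if wR n ≤ (30 / (θ * δ)) ^ (4 / θ) then
                2 * Real.log (4 / δ) + 4 * Real.log (1 + (30 / (θ * δ)) ^ (4 / θ)) else 0))) :=
          (Real.exp_sum _ _).symm
      _ ≤ Real.exp (2460 / θ ^ 2 * (30 / θ) ^ (4 / θ) * δ ^ (-(5 / θ)) + δ * S) := by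
          apply Real.exp_le_exp.mpr
          rw [Finset.sum_add_distrib]
          have h1 : ∑ n ∈ l.support, δ * (|(l n : ℝ)| * wR n ^ (θ / 2)) = δ * S := by
            rw [hS, Finset.mul_sum]
          have h2 := gsum θ δ hθ0 hθ1 hδ0 hδ1 l.support
          rw [h1]
          linarith
  calc Real.exp (-(2460 / θ ^ 2 * (30 / θ) ^ (4 / θ) * δ ^ (-(5 / θ))) - δ * S)
      = (Real.exp (2460 / θ ^ 2 * (30 / θ) ^ (4 / θ) * δ ^ (-(5 / θ)) + δ * S))⁻¹ := by
        rw [← Real.exp_neg]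
        congr 1
        ring
    _ ≤ P⁻¹ := inv_anti₀ hP0 hPle
end
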